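/- arXiv:2001.07905 — 3 statements merged into one kernel-verified Lean document; each statement's English description precedes it below -/
import Mathlib

section
/- A functional φ ∈ Φ is a viscosity solution of the Cauchy problem if and only if it satisfies the terminal condition φ(ϑ,z,w(·)) = σ(z,w(·)) for all (z,w(·)) ∈ ℝ^n × PC and the inequalities: p0 + H(τ,z,w(·),p) ≤ 0 for every (p0,p) ∈ D⁻φ(τ,z,w(·)), and q0 + H(τ,z,w(·),q) ≥ 0 for every (q0,q) ∈ D⁺φ(τ,z,w(·)), for all (τ,z,w(·)) ∈ G with τ < ϑ. -/
noncomputable section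

open MeasureTheory Set Filter Topology Asymptotics RealInnerProductSpace
open scoped NNReal

namespace DGPaper

abbrev E (n : ℕ) : Type := EuclideanSpace ℝ (Fin n)

variable {n l m : ℕ}

/-- `x` is piecewise continuous on `[a,b)` (equivalently `[a,b]`, the value at `b` being free):
there is a finite partition `a = ξ₀ < ξ₁ < … = b` such that `x` is continuous on each
`[ξ i, ξ (i+1))` and has a finite left limit at each `ξ (i+1)`. -/
def PCOn (x : ℝ → E n) (a b : ℝ) : Prop :=
  ∃ k : ℕ, ∃ ξ : Fin (k + 2) → ℝ, StrictMono ξ ∧ ξ 0 = a ∧ ξ (Fin.last (k + 1)) = b ∧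
    ∀ i : Fin (k + 1), ContinuousOn x (Ico (ξ i.castSucc) (ξ i.succ)) ∧
      ∃ L : E n, Tendsto x (𝓝[<] ξ i.succ) (𝓝 L)

/-- membership in the space `PC = PC([-h,0), ℝⁿ)`. -/
def PCh (h : ℝ) (w : ℝ → E n) : Prop := PCOn w (-h) 0

/-- `‖w‖₁ = ∫_{-h}^0 ‖w ξ‖ dξ`. -/
def norm1 (h : ℝ) (w : ℝ → E n) : ℝ := ∫ ξ in (-h)..(0:ℝ), ‖w ξ‖

/-- `‖w‖_∞ = sup_{ξ ∈ [-h,0)} ‖w ξ‖`. -/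
def normInf (h : ℝ) (w : ℝ → E n) : ℝ := sSup ((fun ξ => ‖w ξ‖) '' Ico (-h) (0 : ℝ))

/-- `(z, w) ∈ P(α)`. -/
def memP (h α : ℝ) (z : E n) (w : ℝ → E n) : Prop := PCh h w ∧ ‖z‖ ≤ α ∧ normInf h w ≤ α

/-- the history segment `x_t(ξ) = x (t + ξ)`. -/
def seg (x : ℝ → E n) (t : ℝ) : ℝ → E n := fun ξ => x (t + ξ)

/-- the constant right extension `κ(·)` of `(τ, z, w)`, i.e. the unique element of
`Λ₀(τ,z,w(·))`. -/
def ext0 (τ : ℝ) (z : E n) (w : ℝ → E n) : ℝ → E n := fun t => if t < τ then w (t - τ) else z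

/-- the set `Λ(τ,z,w(·))` of Lipschitz right extensions. -/
def Lam (ϑ h τ : ℝ) (z : E n) (w : ℝ → E n) : Set (ℝ → E n) :=
  {x | PCOn x (τ - h) ϑ ∧ x τ = z ∧ (∀ t ∈ Ico (τ - h) τ, x t = w (t - τ)) ∧
    ∃ K : ℝ≥0, LipschitzOnWith K x (Icc τ ϑ)}

/-- membership in the class `Φ`. -/
def InPhi (t0 ϑ h : ℝ) (φ : ℝ → E n → (ℝ → E n) → ℝ) : Prop :=
  (∀ (z : E n) (w : ℝ → E n), PCh h w → ContinuousOn (fun τ => φ τ z w) (Icc t0 ϑ)) ∧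
  ∀ α > (0 : ℝ), ∃ lφ > (0 : ℝ), ∀ τ ∈ Icc t0 ϑ, ∀ (z z' : E n) (w w' : ℝ → E n),
    memP h α z w → memP h α z' w' →
    |φ τ z w - φ τ z' w'| ≤ lφ * (‖z - z'‖ + norm1 h (fun ξ => w ξ - w' ξ))

/-- condition (C1). -/
def CondC1 (t0 ϑ h : ℝ) (f : ℝ → E n → (ℝ → E n) → E l → E m → E n)
    (f0 : ℝ → E n → (ℝ → E n) → E l → E m → ℝ) : Prop :=
  ∀ (x : E n) (r : ℝ → E n), PCh h r →
    ContinuousOn (fun p : ℝ × E l × E m => f p.1 x r p.2.1 p.2.2)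
      (Icc t0 ϑ ×ˢ (univ : Set (E l × E m))) ∧
    ContinuousOn (fun p : ℝ × E l × E m => f0 p.1 x r p.2.1 p.2.2)
      (Icc t0 ϑ ×ˢ (univ : Set (E l × E m)))

/-- condition (C2). -/
def CondC2 (t0 ϑ h : ℝ) (U : Set (E l)) (V : Set (E m))
    (f : ℝ → E n → (ℝ → E n) → E l → E m → E n)
    (f0 : ℝ → E n → (ℝ → E n) → E l → E m → ℝ) : Prop :=
  ∃ cf > (0 : ℝ), ∀ t ∈ Icc t0 ϑ, ∀ (x : E n) (r : ℝ → E n), PCh h r →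
    ∀ u ∈ U, ∀ v ∈ V,
      ‖f t x r u v‖ + |f0 t x r u v| ≤ cf * (1 + ‖x‖ + norm1 h r + ‖r (-h)‖)

/-- condition (C3). -/
def CondC3 (t0 ϑ h : ℝ) (U : Set (E l)) (V : Set (E m))
    (f : ℝ → E n → (ℝ → E n) → E l → E m → E n)
    (f0 : ℝ → E n → (ℝ → E n) → E l → E m → ℝ) : Prop :=
  ∀ α > (0 : ℝ), ∃ lf > (0 : ℝ), ∀ t ∈ Icc t0 ϑ, ∀ (x x' : E n) (r r' : ℝ → E n),
    memP h α x r → memP h α x' r' → ∀ u ∈ U, ∀ v ∈ V,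
      ‖f t x r u v - f t x' r' u v‖ + |f0 t x r u v - f0 t x' r' u v| ≤
        lf * (‖x - x'‖ + norm1 h (fun ξ => r ξ - r' ξ) + ‖r (-h) - r' (-h)‖)

/-- the Hamiltonian `H`. -/
def Ham (U : Set (E l)) (V : Set (E m))
    (f : ℝ → E n → (ℝ → E n) → E l → E m → E n)
    (f0 : ℝ → E n → (ℝ → E n) → E l → E m → ℝ)
    (τ : ℝ) (z : E n) (w : ℝ → E n) (s : E n) : ℝ :=
  ⨅ u : U, ⨆ v : V, (⟪f τ z w u v, s⟫ + f0 τ z w u v)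

/-- condition (C4), Isaacs' condition. -/
def CondC4 (t0 ϑ h : ℝ) (U : Set (E l)) (V : Set (E m))
    (f : ℝ → E n → (ℝ → E n) → E l → E m → E n)
    (f0 : ℝ → E n → (ℝ → E n) → E l → E m → ℝ) : Prop :=
  ∀ t ∈ Icc t0 ϑ, ∀ (x : E n) (r : ℝ → E n), PCh h r → ∀ s : E n,
    (⨅ u : U, ⨆ v : V, (⟪f t x r u v, s⟫ + f0 t x r u v)) =
    (⨆ v : V, ⨅ u : U, (⟪f t x r u v, s⟫ + f0 t x r u v))

/-- condition (C5). -/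
def CondC5 (h : ℝ) (σ : E n → (ℝ → E n) → ℝ) : Prop :=
  ∀ α > (0 : ℝ), ∃ ls > (0 : ℝ), ∀ (x x' : E n) (r r' : ℝ → E n),
    memP h α x r → memP h α x' r' →
    |σ x r - σ x' r'| ≤ ls * (‖x - x'‖ + norm1 h (fun ξ => r ξ - r' ξ))

/-- the set of admissible control realizations on `[τ, ϑ]` with values in `U`. -/
def Ctrl (ϑ τ : ℝ) {d : ℕ} (U : Set (E d)) : Set (ℝ → E d) :=
  {u | Measurable u ∧ ∀ t ∈ Icc τ ϑ, u t ∈ U}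

/-- `x(·)` is the motion of the delay system generated from the initial position `(τ,z,w(·))`
by the control realizations `u(·)`, `v(·)`. -/
def IsMotion (ϑ h : ℝ) (f : ℝ → E n → (ℝ → E n) → E l → E m → E n)
    (τ : ℝ) (z : E n) (w : ℝ → E n) (u : ℝ → E l) (v : ℝ → E m) (x : ℝ → E n) : Prop :=
  x τ = z ∧ (∀ t ∈ Ico (τ - h) τ, x t = w (t - τ)) ∧ PCOn x (τ - h) ϑ ∧
  (∃ K : ℝ≥0, LipschitzOnWith K x (Icc τ ϑ)) ∧
  ∀ᵐ t ∂(volume : Measure ℝ), t ∈ Icc τ ϑ → HasDerivAt x (f t (x t) (seg x t) (u t) (v t)) t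

/-- `X` assigns to initial data and controls the unique generated motion. -/
def MotionMap (t0 ϑ h : ℝ) (U : Set (E l)) (V : Set (E m))
    (f : ℝ → E n → (ℝ → E n) → E l → E m → E n)
    (X : ℝ → E n → (ℝ → E n) → (ℝ → E l) → (ℝ → E m) → ℝ → E n) : Prop :=
  ∀ τ ∈ Icc t0 ϑ, ∀ (z : E n) (w : ℝ → E n), PCh h w →
    ∀ u ∈ Ctrl ϑ τ U, ∀ v ∈ Ctrl ϑ τ V,
      IsMotion ϑ h f τ z w u v (X τ z w u v) ∧
      ∀ x' : ℝ → E n, IsMotion ϑ h f τ z w u v x' → EqOn x' (X τ z w u v) (Icc (τ - h) ϑ)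

/-- the quality index `γ` along a motion. -/
def cost (ϑ : ℝ) (f0 : ℝ → E n → (ℝ → E n) → E l → E m → ℝ) (σ : E n → (ℝ → E n) → ℝ)
    (τ : ℝ) (x : ℝ → E n) (u : ℝ → E l) (v : ℝ → E m) : ℝ :=
  σ (x ϑ) (seg x ϑ) + ∫ t in τ..ϑ, f0 t (x t) (seg x t) (u t) (v t)

/-- non-anticipative strategy of the first player. -/
def Nonant1 (ϑ τ : ℝ) (U : Set (E l)) (V : Set (E m)) (Q : (ℝ → E m) → ℝ → E l) : Prop :=
  (∀ v ∈ Ctrl ϑ τ V, Q v ∈ Ctrl ϑ τ U) ∧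
  ∀ v ∈ Ctrl ϑ τ V, ∀ v' ∈ Ctrl ϑ τ V, ∀ t ∈ Icc τ ϑ,
    (∀ᵐ ξ ∂(volume : Measure ℝ), ξ ∈ Icc τ t → v ξ = v' ξ) →
    (∀ᵐ ξ ∂(volume : Measure ℝ), ξ ∈ Icc τ t → Q v ξ = Q v' ξ)

/-- non-anticipative strategy of the second player. -/
def Nonant2 (ϑ τ : ℝ) (U : Set (E l)) (V : Set (E m)) (Q : (ℝ → E l) → ℝ → E m) : Prop :=
  (∀ u ∈ Ctrl ϑ τ U, Q u ∈ Ctrl ϑ τ V) ∧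
  ∀ u ∈ Ctrl ϑ τ U, ∀ u' ∈ Ctrl ϑ τ U, ∀ t ∈ Icc τ ϑ,
    (∀ᵐ ξ ∂(volume : Measure ℝ), ξ ∈ Icc τ t → u ξ = u' ξ) →
    (∀ᵐ ξ ∂(volume : Measure ℝ), ξ ∈ Icc τ t → Q u ξ = Q u' ξ)

/-- the lower value functional `ρᵘ`. -/
def rhoU (ϑ : ℝ) (U : Set (E l)) (V : Set (E m))
    (f0 : ℝ → E n → (ℝ → E n) → E l → E m → ℝ) (σ : E n → (ℝ → E n) → ℝ)
    (X : ℝ → E n → (ℝ → E n) → (ℝ → E l) → (ℝ → E m) → ℝ → E n)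
    (τ : ℝ) (z : E n) (w : ℝ → E n) : ℝ :=
  ⨅ Q : {Q : (ℝ → E m) → ℝ → E l // Nonant1 ϑ τ U V Q},
    ⨆ v : Ctrl ϑ τ V, cost ϑ f0 σ τ (X τ z w (Q.1 v.1) v.1) (Q.1 v.1) v.1

/-- the upper value functional `ρᵛ`. -/
def rhoV (ϑ : ℝ) (U : Set (E l)) (V : Set (E m))
    (f0 : ℝ → E n → (ℝ → E n) → E l → E m → ℝ) (σ : E n → (ℝ → E n) → ℝ)
    (X : ℝ → E n → (ℝ → E n) → (ℝ → E l) → (ℝ → E m) → ℝ → E n)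
    (τ : ℝ) (z : E n) (w : ℝ → E n) : ℝ :=
  ⨆ Q : {Q : (ℝ → E l) → ℝ → E m // Nonant2 ϑ τ U V Q},
    ⨅ u : Ctrl ϑ τ U, cost ϑ f0 σ τ (X τ z w u.1 (Q.1 u.1)) u.1 (Q.1 u.1)

/-- the neighborhood `O⁺_δ(τ,z)`. -/
def Oplus (δ τ : ℝ) (z : E n) : Set (ℝ × E n) := {p | p.1 ∈ Icc τ (τ + δ) ∧ ‖p.2 - z‖ ≤ δ}

/-- the terminal condition `φ(ϑ,z,w(·)) = σ(z,w(·))`. -/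
def TerminalCond (ϑ h : ℝ) (σ : E n → (ℝ → E n) → ℝ) (φ : ℝ → E n → (ℝ → E n) → ℝ) : Prop :=
  ∀ (z : E n) (w : ℝ → E n), PCh h w → φ ϑ z w = σ z w

/-- `φ ∈ Φ` is a viscosity solution of the Cauchy problem. -/
def IsViscositySol (t0 ϑ h : ℝ) (U : Set (E l)) (V : Set (E m))
    (f : ℝ → E n → (ℝ → E n) → E l → E m → E n)
    (f0 : ℝ → E n → (ℝ → E n) → E l → E m → ℝ) (σ : E n → (ℝ → E n) → ℝ)
    (φ : ℝ → E n → (ℝ → E n) → ℝ) : Prop :=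
  InPhi t0 ϑ h φ ∧ TerminalCond ϑ h σ φ ∧
  (∀ τ ∈ Ico t0 ϑ, ∀ (z : E n) (w : ℝ → E n), PCh h w →
    ∀ ψ : ℝ × E n → ℝ, ContDiff ℝ 1 ψ → ∀ δ > (0 : ℝ),
      (∀ p ∈ Oplus δ τ z, φ τ z w - ψ (τ, z) ≤ φ p.1 p.2 (seg (ext0 τ z w) p.1) - ψ p) →
      deriv (fun t => ψ (t, z)) τ +
        Ham U V f f0 τ z w (gradient (fun x => ψ (τ, x)) z) ≤ 0) ∧
  (∀ τ ∈ Ico t0 ϑ, ∀ (z : E n) (w : ℝ → E n), PCh h w →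
    ∀ ψ : ℝ × E n → ℝ, ContDiff ℝ 1 ψ → ∀ δ > (0 : ℝ),
      (∀ p ∈ Oplus δ τ z, φ p.1 p.2 (seg (ext0 τ z w) p.1) - ψ p ≤ φ τ z w - ψ (τ, z)) →
      0 ≤ deriv (fun t => ψ (t, z)) τ +
        Ham U V f f0 τ z w (gradient (fun x => ψ (τ, x)) z))

/-- `φ` has ci-derivatives `(c, g)` at `(τ,z,w(·))`. -/
def HasCiDerivAt (ϑ h : ℝ) (φ : ℝ → E n → (ℝ → E n) → ℝ) (c : ℝ) (g : E n)
    (τ : ℝ) (z : E n) (w : ℝ → E n) : Prop :=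
  ∀ y ∈ Lam ϑ h τ z w,
    (fun p : ℝ × E n => φ p.1 p.2 (seg y p.1) - φ τ z w - (p.1 - τ) * c - ⟪p.2 - z, g⟫)
      =o[𝓝[Icc τ ϑ ×ˢ (univ : Set (E n))] ((τ, z) : ℝ × E n)]
        fun p : ℝ × E n => |p.1 - τ| + ‖p.2 - z‖

/-- the subdifferential `D⁻φ(τ,z,w(·))`. -/
def Dminus (φ : ℝ → E n → (ℝ → E n) → ℝ) (τ : ℝ) (z : E n) (w : ℝ → E n) : Set (ℝ × E n) :=
  {p | ∀ ε > (0 : ℝ), ∃ δ > (0 : ℝ), ∀ q ∈ Oplus δ τ z, q ≠ ((τ, z) : ℝ × E n) →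
    -ε ≤ (φ q.1 q.2 (seg (ext0 τ z w) q.1) - φ τ z w - (q.1 - τ) * p.1 - ⟪q.2 - z, p.2⟫) /
      (|q.1 - τ| + ‖q.2 - z‖)}

/-- the superdifferential `D⁺φ(τ,z,w(·))`. -/
def Dplus (φ : ℝ → E n → (ℝ → E n) → ℝ) (τ : ℝ) (z : E n) (w : ℝ → E n) : Set (ℝ × E n) :=
  {q | ∀ ε > (0 : ℝ), ∃ δ > (0 : ℝ), ∀ p ∈ Oplus δ τ z, p ≠ ((τ, z) : ℝ × E n) →
    (φ p.1 p.2 (seg (ext0 τ z w) p.1) - φ τ z w - (p.1 - τ) * q.1 - ⟪p.2 - z, q.2⟫) /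
      (|p.1 - τ| + ‖p.2 - z‖) ≤ ε}

/-- the lower right directional derivative `∂⁻_{(l0,l)} φ(τ,z,w(·))`. -/
def lowerDirDeriv (φ : ℝ → E n → (ℝ → E n) → ℝ) (τ : ℝ) (z : E n) (w : ℝ → E n)
    (l0 : ℝ) (lv : E n) : ℝ :=
  Filter.liminf
    (fun p : ℝ × (ℝ × E n) =>
      (φ (τ + p.2.1 * p.1) (z + p.1 • p.2.2) (seg (ext0 τ z w) (τ + p.2.1 * p.1)) - φ τ z w) / p.1)
    ((𝓝[>] (0 : ℝ)) ×ˢ 𝓝[Ici (0 : ℝ) ×ˢ (univ : Set (E n))] ((l0, lv) : ℝ × E n))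

/-- the upper right directional derivative `∂⁺_{(l0,l)} φ(τ,z,w(·))`. -/
def upperDirDeriv (φ : ℝ → E n → (ℝ → E n) → ℝ) (τ : ℝ) (z : E n) (w : ℝ → E n)
    (l0 : ℝ) (lv : E n) : ℝ :=
  Filter.limsup
    (fun p : ℝ × (ℝ × E n) =>
      (φ (τ + p.2.1 * p.1) (z + p.1 • p.2.2) (seg (ext0 τ z w) (τ + p.2.1 * p.1)) - φ τ z w) / p.1)
    ((𝓝[>] (0 : ℝ)) ×ˢ 𝓝[Ici (0 : ℝ) ×ˢ (univ : Set (E n))] ((l0, lv) : ℝ × E n))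

/-- the stability (u- and v-stability) property of a functional. -/
def IsStable (t0 ϑ h : ℝ) (U : Set (E l)) (V : Set (E m))
    (f0 : ℝ → E n → (ℝ → E n) → E l → E m → ℝ)
    (X : ℝ → E n → (ℝ → E n) → (ℝ → E l) → (ℝ → E m) → ℝ → E n)
    (φ : ℝ → E n → (ℝ → E n) → ℝ) : Prop :=
  ∀ τ ∈ Icc t0 ϑ, ∀ (z : E n) (w : ℝ → E n), PCh h w → ∀ t ∈ Icc τ ϑ,
    (⨆ v : Ctrl ϑ τ V, ⨅ u : Ctrl ϑ τ U,
        (φ t (X τ z w u.1 v.1 t) (seg (X τ z w u.1 v.1) t) +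
          ∫ ξ in τ..t, f0 ξ (X τ z w u.1 v.1 ξ) (seg (X τ z w u.1 v.1) ξ) (u.1 ξ) (v.1 ξ)))
      ≤ φ τ z w ∧
    φ τ z w ≤
      ⨅ u : Ctrl ϑ τ U, ⨆ v : Ctrl ϑ τ V,
        (φ t (X τ z w u.1 v.1 t) (seg (X τ z w u.1 v.1) t) +
          ∫ ξ in τ..t, f0 ξ (X τ z w u.1 v.1 ξ) (seg (X τ z w u.1 v.1) ξ) (u.1 ξ) (v.1 ξ))

/-- Continuity of the primitive of a boundedly integrable function. -/
lemma continuous_primitive_of_bdd (F : ℝ → ℝ) (C : ℝ) (hC : 0 ≤ C)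
    (hint : ∀ a b : ℝ, IntervalIntegrable F volume a b)
    (hbd : ∀ r, |F r| ≤ C) :
    Continuous (fun s => ∫ t in (0:ℝ)..s, F t) := by
  have hlip : LipschitzWith (Real.toNNReal C) (fun s => ∫ t in (0:ℝ)..s, F t) := by
    apply LipschitzWith.of_dist_le_mul
    intro a b
    have hsub : (∫ t in (0:ℝ)..a, F t) - (∫ t in (0:ℝ)..b, F t) = ∫ t in b..a, F t :=
      intervalIntegral.integral_interval_sub_left (hint 0 a) (hint 0 b)
    have hbound : ‖∫ t in b..a, F t‖ ≤ C * |a - b| :=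
      intervalIntegral.norm_integral_le_of_norm_le_const (fun x _ => by
        simpa using hbd x)
    rw [Real.dist_eq, Real.dist_eq]
    calc |(∫ t in (0:ℝ)..a, F t) - (∫ t in (0:ℝ)..b, F t)| = ‖∫ t in b..a, F t‖ := by
          rw [hsub]; rfl
      _ ≤ C * |a - b| := hbound
      _ = (Real.toNNReal C : ℝ) * |a - b| := by rw [Real.coe_toNNReal C hC]
  exact hlip.continuous


/-- One averaging step. -/
lemma avg_step (F : ℝ → ℝ) (C : ℝ) (hC : 0 ≤ C) (hmono : Monotone F) (hF0 : ∀ r, 0 ≤ F r)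
    (hbd : ∀ r, F r ≤ C) :
    ∃ G : ℝ → ℝ,
      (∀ s, G s = if 0 < s then (∫ t in (0:ℝ)..(2*s), F t) / s else 0) ∧
      Monotone G ∧ (∀ s, 0 ≤ G s) ∧ (∀ s, s ≤ 0 → G s = 0) ∧
      (∀ s, 0 < s → F s ≤ G s) ∧ (∀ s, 0 < s → G s ≤ 2 * F (2*s)) ∧
      (∀ s, G s ≤ 2 * C) ∧ (∀ s, 0 < s → ContinuousAt G s) := by
  have hint : ∀ a b : ℝ, IntervalIntegrable F volume a b := fun a b =>
    (hmono.monotoneOn _).intervalIntegrable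
  set H : ℝ → ℝ := fun s => ∫ t in (0:ℝ)..s, F t with hH
  have hHcont : Continuous H :=
    continuous_primitive_of_bdd F C hC hint (fun r => by
      rw [abs_of_nonneg (hF0 r)]; exact hbd r)
  -- lower bound : s * F s ≤ H (2*s)
  have key1 : ∀ s : ℝ, 0 < s → s * F s ≤ H (2*s) := by
    intro s hs
    have hsplit : (∫ t in (0:ℝ)..s, F t) + (∫ t in s..(2*s), F t) = H (2*s) :=
      intervalIntegral.integral_add_adjacent_intervals (hint 0 s) (hint s (2*s))
    have h1 : 0 ≤ ∫ t in (0:ℝ)..s, F t :=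
      intervalIntegral.integral_nonneg hs.le (fun x _ => hF0 x)
    have h2 : (∫ t in s..(2*s), F t) ≥ ∫ _t in s..(2*s), F s := by
      apply intervalIntegral.integral_mono_on (by linarith) intervalIntegrable_const (hint s (2*s))
      intro x hx; exact hmono hx.1
    have h3 : (∫ _t in s..(2*s), F s) = s * F s := by
      rw [intervalIntegral.integral_const, smul_eq_mul]; ring
    linarith [hsplit, h1, h2, h3.symm ▸ h2]
  -- upper bound : H (2*s) ≤ 2*s * F (2*s)
  have key2 : ∀ s : ℝ, 0 ≤ s → H (2*s) ≤ (2*s) * F (2*s) := by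
    intro s hs
    have h2 : (∫ t in (0:ℝ)..(2*s), F t) ≤ ∫ _t in (0:ℝ)..(2*s), F (2*s) := by
      apply intervalIntegral.integral_mono_on (by linarith) (hint 0 (2*s)) intervalIntegrable_const
      intro x hx; exact hmono hx.2
    have h3 : (∫ _t in (0:ℝ)..(2*s), F (2*s)) = (2*s) * F (2*s) := by
      rw [intervalIntegral.integral_const, smul_eq_mul]; ring
    linarith [h3 ▸ h2]
  have hHnonneg : ∀ s : ℝ, 0 ≤ s → 0 ≤ H s := fun s hs =>
    intervalIntegral.integral_nonneg hs (fun x _ => hF0 x)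
  refine ⟨fun s => if 0 < s then H (2*s) / s else 0, fun s => rfl, ?_, ?_, ?_, ?_, ?_, ?_, ?_⟩
  · -- Monotone
    intro a b hab
    by_cases hb : 0 < b
    · by_cases ha : 0 < a
      · simp only [if_pos ha, if_pos hb]
        rw [div_le_div_iff₀ ha hb]
        have hsplit : H (2*a) + (∫ t in (2*a)..(2*b), F t) = H (2*b) :=
          intervalIntegral.integral_add_adjacent_intervals (hint 0 (2*a)) (hint (2*a) (2*b))
        have h2 : (∫ t in (2*a)..(2*b), F t) ≥ ∫ _t in (2*a)..(2*b), F (2*a) := by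
          apply intervalIntegral.integral_mono_on (by linarith) intervalIntegrable_const
            (hint (2*a) (2*b))
          intro x hx; exact hmono hx.1
        have h3 : (∫ _t in (2*a)..(2*b), F (2*a)) = (2*b - 2*a) * F (2*a) := by
          rw [intervalIntegral.integral_const, smul_eq_mul]
        have hk2 := key2 a ha.le
        have hHa := hHnonneg (2*a) (by linarith)
        have hFa := hF0 (2*a)
        nlinarith [h3 ▸ h2]
      · simp only [if_neg ha, if_pos hb]
        have := hHnonneg (2*b) (by linarith)
        positivity
    · have ha : ¬ 0 < a := fun h => hb (lt_of_lt_of_le h hab)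
      simp [if_neg ha, if_neg hb]
  · -- nonneg
    intro s
    by_cases hs : 0 < s
    · simp only [if_pos hs]
      exact div_nonneg (hHnonneg (2*s) (by linarith)) hs.le
    · simp [if_neg hs]
  · -- zero on nonpos
    intro s hs; simp [not_lt.mpr hs]
  · -- F ≤ G
    intro s hs
    simp only [if_pos hs]
    rw [le_div_iff₀ hs]
    have := key1 s hs; linarith
  · -- G ≤ 2 F(2s)
    intro s hs
    simp only [if_pos hs]
    rw [div_le_iff₀ hs]
    have := key2 s hs.le; linarith
  · -- G ≤ 2C
    intro s
    by_cases hs : 0 < s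
    · simp only [if_pos hs]
      rw [div_le_iff₀ hs]
      have := key2 s hs.le
      have := hbd (2*s)
      have := hF0 (2*s)
      nlinarith
    · simp [if_neg hs]; positivity
  · -- continuity on (0,∞)
    intro s hs
    have hev : (fun u => H (2*u) / u) =ᶠ[𝓝 s] fun u => if 0 < u then H (2*u) / u else 0 := by
      filter_upwards [Ioi_mem_nhds hs] with u hu
      simp [if_pos (mem_Ioi.mp hu)]
    refine ContinuousAt.congr ?_ hev
    exact ((hHcont.comp (continuous_const.mul continuous_id)).continuousAt).div
      continuousAt_id hs.ne'


/-- The key construction: a vanishing monotone modulus can be dominated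
by a `C¹` function with zero derivative at `0`. -/
lemma exists_C1_dominating (M : ℝ → ℝ) (C : ℝ) (hC : 0 ≤ C) (hmono : Monotone M)
    (hM0 : ∀ r, 0 ≤ M r) (hMbd : ∀ r, M r ≤ C)
    (hsmall : ∀ ε > (0:ℝ), ∃ δ > (0:ℝ), ∀ r, 0 < r → r ≤ δ → M r ≤ ε * r) :
    ∃ g : ℝ → ℝ, ContDiff ℝ 1 g ∧ g 0 = 0 ∧ HasDerivAt g 0 0 ∧ deriv g 0 = 0 ∧
      (∀ r, 0 ≤ g r) ∧ ∀ r, 0 < r → M r ≤ g r := by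
  obtain ⟨g₁, hg₁def, hg₁mono, hg₁nn, hg₁z, hg₁ge, hg₁le, hg₁bd, hg₁cont⟩ :=
    avg_step M C hC hmono hM0 hMbd
  obtain ⟨g, hgdef, _hgmono, hgnn, hgz, hgge, hgle, _hgbd, _⟩ :=
    avg_step g₁ (2*C) (by linarith) hg₁mono hg₁nn hg₁bd
  -- smallness transfer
  have hg₁small : ∀ ε > (0:ℝ), ∃ δ > (0:ℝ), ∀ s, 0 < s → s ≤ δ → g₁ s ≤ ε * s := by
    intro ε hε
    obtain ⟨δ, hδ, hδP⟩ := hsmall (ε/4) (by positivity)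
    refine ⟨δ/2, by positivity, fun s hs hsle => ?_⟩
    have h1 := hg₁le s hs
    have h2 := hδP (2*s) (by positivity) (by linarith)
    linarith
  have hgsmall : ∀ ε > (0:ℝ), ∃ δ > (0:ℝ), ∀ r, 0 < r → r ≤ δ → g r ≤ ε * r := by
    intro ε hε
    obtain ⟨δ, hδ, hδP⟩ := hg₁small (ε/4) (by positivity)
    refine ⟨δ/2, by positivity, fun r hr hrle => ?_⟩
    have h1 := hgle r hr
    have h2 := hδP (2*r) (by positivity) (by linarith)
    linarith
  -- auxiliary facts about g₁ and its primitive
  have hg₁meas : Measurable g₁ := hg₁mono.measurable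
  have hg₁int : ∀ a b : ℝ, IntervalIntegrable g₁ volume a b := fun a b =>
    (hg₁mono.monotoneOn _).intervalIntegrable
  set H₁ : ℝ → ℝ := fun s => ∫ t in (0:ℝ)..s, g₁ t with hH₁
  have hH₁cont : Continuous H₁ :=
    continuous_primitive_of_bdd g₁ (2*C) (by linarith) hg₁int
      (fun r => by rw [abs_of_nonneg (hg₁nn r)]; exact hg₁bd r)
  have hH₁deriv : ∀ y : ℝ, 0 < y → HasDerivAt H₁ (g₁ y) y := by
    intro y hy
    apply intervalIntegral.integral_hasDerivAt_right (hg₁int 0 y)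
      ⟨Set.univ, Filter.univ_mem, (hg₁meas.aestronglyMeasurable).restrict⟩
    exact hg₁cont y hy
  -- relation g r = H₁(2r)/r for r > 0
  have hgpos : ∀ r : ℝ, 0 < r → g r = H₁ (2*r) / r := by
    intro r hr; rw [hgdef r, if_pos hr]
  have hH₁le : ∀ r : ℝ, 0 < r → H₁ (2*r) ≤ (2*r) * g₁ (2*r) := by
    intro r hr
    have h := hgle r hr
    rw [hgpos r hr, div_le_iff₀ hr] at h
    nlinarith
  have hH₁nonneg : ∀ r : ℝ, 0 < r → 0 ≤ H₁ (2*r) := by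
    intro r hr
    have h := hgnn r
    rw [hgpos r hr, le_div_iff₀ hr] at h
    nlinarith
  -- derivative of g
  set D : ℝ → ℝ := fun r => if 0 < r then (g₁ (2*r) * 2 * r - H₁ (2*r) * 1) / r^2 else 0 with hD
  have hDpos : ∀ r : ℝ, 0 < r → HasDerivAt g (D r) r := by
    intro r hr
    have h2 : HasDerivAt (fun u : ℝ => 2*u) 2 r := by
      simpa using (hasDerivAt_id r).const_mul (2:ℝ)
    have h1 : HasDerivAt (fun u => H₁ (2*u)) (g₁ (2*r) * 2) r :=
      (hH₁deriv (2*r) (by positivity)).comp r h2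
    have h3 : HasDerivAt (fun u => H₁ (2*u) / u) ((g₁ (2*r) * 2 * r - H₁ (2*r) * 1) / r^2) r :=
      h1.div (hasDerivAt_id r) hr.ne'
    have h4 : (fun u => H₁ (2*u) / u) =ᶠ[𝓝 r] g := by
      filter_upwards [Ioi_mem_nhds hr] with u hu
      rw [hgpos u (mem_Ioi.mp hu)]
    have h5 := h3.congr_of_eventuallyEq h4.symm
    simpa only [hD, if_pos hr] using h5
  have hDneg : ∀ r : ℝ, r < 0 → HasDerivAt g (D r) r := by
    intro r hr
    have h4 : (fun _ : ℝ => (0:ℝ)) =ᶠ[𝓝 r] g := by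
      filter_upwards [Iio_mem_nhds hr] with u hu
      exact (hgz u (le_of_lt (mem_Iio.mp hu))).symm
    have h5 := (hasDerivAt_const r (0:ℝ)).congr_of_eventuallyEq h4.symm
    simpa only [hD, if_neg (not_lt.mpr hr.le)] using h5
  have hg00 : g 0 = 0 := hgz 0 le_rfl
  have hDzero : HasDerivAt g 0 0 := by
    rw [hasDerivAt_iff_isLittleO, isLittleO_iff]
    intro c hc
    obtain ⟨δ, hδ, hδP⟩ := hgsmall c hc
    filter_upwards [Metric.ball_mem_nhds (0:ℝ) hδ] with r hrball
    have hrd : |r| < δ := by simpa [Real.dist_eq] using hrball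
    simp only [sub_zero, smul_zero, hg00, Real.norm_eq_abs]
    rcases le_or_gt r 0 with h | h
    · rw [hgz r h]; simp; positivity
    · rw [abs_of_nonneg (hgnn r), abs_of_pos h]
      exact hδP r h (by linarith [le_abs_self r, hrd.le])
  have hderivAt : ∀ r : ℝ, HasDerivAt g (D r) r := by
    intro r
    rcases lt_trichotomy r 0 with h | h | h
    · exact hDneg r h
    · subst h; simpa only [hD, if_neg (lt_irrefl (0:ℝ))] using hDzero
    · exact hDpos r h
  have hderiv_eq : deriv g = D := funext fun r => (hderivAt r).deriv
  -- continuity of D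
  have hDcont : Continuous D := by
    rw [continuous_iff_continuousAt]
    intro r
    rcases lt_trichotomy r 0 with h | h | h
    · have h4 : (fun _ : ℝ => (0:ℝ)) =ᶠ[𝓝 r] D := by
        filter_upwards [Iio_mem_nhds h] with u hu
        simp [hD, if_neg (not_lt.mpr (le_of_lt (mem_Iio.mp hu)))]
      exact continuousAt_const.congr h4
    · subst h
      -- continuity at 0
      rw [Metric.continuousAt_iff]
      intro ε hε
      obtain ⟨δ, hδ, hδP⟩ := hg₁small (ε/8) (by positivity)
      refine ⟨δ/2, by positivity, fun y hy => ?_⟩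
      have hy' : |y| < δ/2 := by simpa [Real.dist_eq] using hy
      have hD0 : D 0 = 0 := by simp [hD]
      rw [Real.dist_eq, hD0, sub_zero]
      rcases le_or_gt y 0 with h | h
      · simp [hD, if_neg (not_lt.mpr h)]; positivity
      · have hnum_lb : 0 ≤ g₁ (2*y) * 2 * y - H₁ (2*y) * 1 := by
          have := hH₁le y h; nlinarith
        have hnum_ub : g₁ (2*y) * 2 * y - H₁ (2*y) * 1 ≤ g₁ (2*y) * 2 * y := by
          have := hH₁nonneg y h; nlinarith
        have hg₁b : g₁ (2*y) ≤ (ε/8) * (2*y) :=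
          hδP (2*y) (by positivity) (by
            have := le_abs_self y; linarith)
        have hDy : D y = (g₁ (2*y) * 2 * y - H₁ (2*y) * 1) / y^2 := by
          simp [hD, if_pos h]
        rw [hDy, abs_of_nonneg (div_nonneg hnum_lb (by positivity))]
        rw [div_lt_iff₀ (by positivity : (0:ℝ) < y^2)]
        nlinarith [mul_le_mul_of_nonneg_right hg₁b (le_of_lt (by positivity : (0:ℝ) < 2*y)),
          mul_pos hε (pow_pos h 2)]
    · have h4 : (fun u => (g₁ (2*u) * 2 * u - H₁ (2*u) * 1) / u^2) =ᶠ[𝓝 r] D := by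
        filter_upwards [Ioi_mem_nhds h] with u hu
        simp [hD, if_pos (mem_Ioi.mp hu)]
      refine ContinuousAt.congr ?_ h4
      have hc1 : ContinuousAt (fun u : ℝ => g₁ (2*u)) r := by
        have := hg₁cont (2*r) (by positivity)
        exact this.comp ((continuous_const.mul continuous_id).continuousAt)
      exact (((hc1.mul continuousAt_const).mul continuousAt_id).sub
        (((hH₁cont.comp (continuous_const.mul continuous_id)).continuousAt).mul
          continuousAt_const)).div (continuousAt_id.pow 2) (by positivity)
  have hcd : ContDiff ℝ 1 g := by
    rw [contDiff_one_iff_deriv]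
    exact ⟨fun r => (hderivAt r).differentiableAt, by rw [hderiv_eq]; exact hDcont⟩
  refine ⟨g, hcd, hg00, hDzero, ?_, hgnn, fun r hr => (hg₁ge r hr).trans (hgge r hr)⟩
  have hD0 : D 0 = 0 := by simp [hD]
  rw [hderiv_eq, hD0]


/-- composing a `C¹` function with zero value and derivative at `0` with the norm. -/
lemma contDiff_comp_norm {n : ℕ} (g : ℝ → ℝ) (hg : ContDiff ℝ 1 g) (hg0 : g 0 = 0)
    (hd0 : deriv g 0 = 0) :
    ContDiff ℝ 1 (fun x : E n => g ‖x‖) ∧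
      HasFDerivAt (fun x : E n => g ‖x‖) (0 : E n →L[ℝ] ℝ) 0 := by
  have hgd : HasDerivAt g 0 0 := by
    have := (hg.differentiable one_ne_zero 0).hasDerivAt
    rwa [hd0] at this
  -- differentiability at 0
  have hF0 : HasFDerivAt (fun x : E n => g ‖x‖) (0 : E n →L[ℝ] ℝ) 0 := by
    rw [hasFDerivAt_iff_isLittleO_nhds_zero, isLittleO_iff]
    intro c hc
    have hlo := isLittleO_iff.mp (hasDerivAt_iff_isLittleO.mp hgd) hc
    have hn : Tendsto (fun x : E n => ‖x‖) (𝓝 0) (𝓝 (0:ℝ)) := by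
      simpa using (continuous_norm.tendsto (0 : E n))
    filter_upwards [hn.eventually hlo] with x hx
    simp only [sub_zero, smul_zero, smul_eq_mul, mul_zero, norm_zero, zero_add, hg0,
      Real.norm_eq_abs, norm_norm, ContinuousLinearMap.zero_apply] at hx ⊢
    simpa using hx
  refine ⟨?_, hF0⟩
  rw [contDiff_one_iff_fderiv]
  have hCD : ∀ x : E n, x ≠ 0 → ContDiffAt ℝ 1 (fun y : E n => g ‖y‖) x := by
    intro x hx
    exact (hg.contDiffAt).comp x (contDiffAt_norm (𝕜 := ℝ) (n := 1) hx)
  constructor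
  · intro x
    by_cases hx : x = 0
    · subst hx; exact hF0.differentiableAt
    · exact (hCD x hx).differentiableAt one_ne_zero
  · rw [continuous_iff_continuousAt]
    intro x
    by_cases hx : x = 0
    · subst hx
      -- continuity of the fderiv at 0
      have hf0 : fderiv ℝ (fun y : E n => g ‖y‖) 0 = 0 := hF0.fderiv
      rw [Metric.continuousAt_iff]
      intro ε hε
      have hdc : Continuous (deriv g) := (contDiff_one_iff_deriv.mp hg).2
      have : Tendsto (deriv g) (𝓝 0) (𝓝 0) := by
        have := hdc.tendsto 0; rwa [hd0] at this
      obtain ⟨δ, hδ, hδP⟩ := Metric.tendsto_nhds_nhds.mp this (ε/2) (by positivity)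
      refine ⟨δ/2, by positivity, fun y hy => ?_⟩
      rw [hf0]
      have hbd : ∀ s ∈ Metric.ball (0:ℝ) δ, ‖deriv g s‖ ≤ ε/2 := by
        intro s hs
        have := hδP (by simpa [Real.dist_eq] using hs)
        rw [Real.dist_eq, sub_zero] at this
        exact le_of_lt (by simpa using this)
      -- g is (ε/2)-Lipschitz on the ball of radius δ
      have hliplocal : ∀ a ∈ Metric.ball (0:ℝ) δ, ∀ b ∈ Metric.ball (0:ℝ) δ,
          ‖g a - g b‖ ≤ (ε/2) * ‖a - b‖ := by
        intro a ha b hb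
        exact Convex.norm_image_sub_le_of_norm_deriv_le
          (fun s _ => hg.differentiable one_ne_zero s) (fun s hs => hbd s hs)
          (convex_ball 0 δ) hb ha
      have hlipf : LipschitzOnWith (Real.toNNReal (ε/2)) (fun y : E n => g ‖y‖)
          (Metric.ball (0 : E n) δ) := by
        apply LipschitzOnWith.of_dist_le_mul
        intro a ha b hb
        have hna : ‖a‖ ∈ Metric.ball (0:ℝ) δ := by
          simpa [Real.dist_eq, abs_of_nonneg (norm_nonneg a)] using mem_ball_zero_iff.mp ha
        have hnb : ‖b‖ ∈ Metric.ball (0:ℝ) δ := by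
          simpa [Real.dist_eq, abs_of_nonneg (norm_nonneg b)] using mem_ball_zero_iff.mp hb
        have h1 := hliplocal ‖a‖ hna ‖b‖ hnb
        have h2 : |‖a‖ - ‖b‖| ≤ ‖a - b‖ := abs_norm_sub_norm_le a b
        rw [Real.dist_eq, dist_eq_norm, Real.coe_toNNReal _ (by positivity : (0:ℝ) ≤ ε/2)]
        calc |g ‖a‖ - g ‖b‖| ≤ (ε/2) * |‖a‖ - ‖b‖| := by simpa [Real.norm_eq_abs] using h1
          _ ≤ (ε/2) * ‖a - b‖ := by
              apply mul_le_mul_of_nonneg_left h2 (by positivity)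
      have hyball : y ∈ Metric.ball (0 : E n) δ := by
        rw [mem_ball_zero_iff]
        have h : dist y 0 < δ/2 := hy
        rw [dist_zero_right] at h
        linarith
      have hmem : Metric.ball (0 : E n) δ ∈ 𝓝 y := (Metric.isOpen_ball).mem_nhds hyball
      have hfd := norm_fderiv_le_of_lipschitzOn ℝ hmem hlipf
      rw [dist_eq_norm, sub_zero]
      calc ‖fderiv ℝ (fun y : E n => g ‖y‖) y‖ ≤ ((Real.toNNReal (ε/2) : ℝ≥0) : ℝ) := hfd
        _ = ε/2 := Real.coe_toNNReal _ (by positivity)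
        _ < ε := by linarith
    · have hopen : IsOpen {y : E n | y ≠ 0} := isOpen_compl_singleton
      have hcdOn : ContDiffOn ℝ 1 (fun y : E n => g ‖y‖) {y : E n | y ≠ 0} :=
        fun y hy => (hCD y hy).contDiffWithinAt
      exact (hcdOn.continuousOn_fderiv_of_isOpen hopen le_rfl).continuousAt
        (hopen.mem_nhds hx)


/-- The smooth test function associated to `(p0, pv)` and a `C¹` penalty `g`. -/
lemma test_function {n : ℕ} (τ : ℝ) (z : E n) (p0 : ℝ) (pv : E n) (g : ℝ → ℝ)
    (hg : ContDiff ℝ 1 g) (hg0 : g 0 = 0) (hd0 : deriv g 0 = 0) :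
    ∃ ψ : ℝ × E n → ℝ, ContDiff ℝ 1 ψ ∧
      (∀ p : ℝ × E n, ψ p = (p.1 - τ) * p0 + ⟪p.2 - z, pv⟫ - g (p.1 - τ) - g ‖p.2 - z‖) ∧
      deriv (fun t => ψ (t, z)) τ = p0 ∧
      gradient (fun x => ψ (τ, x)) z = pv := by
  have hgd : HasDerivAt g 0 0 := by
    have := (hg.differentiable one_ne_zero 0).hasDerivAt
    rwa [hd0] at this
  obtain ⟨hnormCD, hnormFD⟩ := contDiff_comp_norm (n := n) g hg hg0 hd0
  refine ⟨fun p => (p.1 - τ) * p0 + ⟪p.2 - z, pv⟫ - g (p.1 - τ) - g ‖p.2 - z‖,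
    ?_, fun p => rfl, ?_, ?_⟩
  · -- ContDiff
    have c1 : ContDiff ℝ 1 (fun p : ℝ × E n => (p.1 - τ) * p0) :=
      (contDiff_fst.sub contDiff_const).mul contDiff_const
    have c2 : ContDiff ℝ 1 (fun p : ℝ × E n => ⟪p.2 - z, pv⟫) :=
      ContDiff.inner ℝ (contDiff_snd.sub contDiff_const) contDiff_const
    have c3 : ContDiff ℝ 1 (fun p : ℝ × E n => g (p.1 - τ)) :=
      hg.comp (contDiff_fst.sub contDiff_const)
    have c4 : ContDiff ℝ 1 (fun p : ℝ × E n => g ‖p.2 - z‖) :=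
      hnormCD.comp (contDiff_snd.sub contDiff_const)
    exact ((c1.add c2).sub c3).sub c4
  · -- time derivative at τ is p0
    have t1 : HasDerivAt (fun t : ℝ => (t - τ) * p0) (1 * p0) τ :=
      ((hasDerivAt_id τ).sub_const τ).mul_const p0
    have hsub : HasDerivAt (fun t : ℝ => t - τ) 1 τ := (hasDerivAt_id τ).sub_const τ
    have t3 : HasDerivAt (fun t : ℝ => g (t - τ)) (0 * 1) τ := by
      have hgd' : HasDerivAt g 0 (τ - τ) := by rwa [sub_self]
      exact HasDerivAt.comp (h₂ := g) (h := fun t : ℝ => t - τ) τ hgd' hsub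
    have tot : HasDerivAt (fun t : ℝ => (t - τ) * p0 + ⟪z - z, pv⟫ - g (t - τ) - g ‖z - z‖)
        (1 * p0 - 0 * 1) τ :=
      ((t1.add_const _).sub t3).sub_const _
    have := tot.deriv
    simpa using this
  · -- gradient at z is pv
    have hsub : HasFDerivAt (fun x : E n => x - z) (ContinuousLinearMap.id ℝ (E n)) z :=
      (hasFDerivAt_id z).sub_const z
    have s2 : HasFDerivAt (fun x : E n => ⟪x - z, pv⟫) (innerSL ℝ pv) z := by
      have h0 : HasFDerivAt (fun x : E n => (innerSL ℝ pv) (x - z))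
          ((innerSL ℝ pv).comp (ContinuousLinearMap.id ℝ (E n))) z :=
        (innerSL ℝ pv).hasFDerivAt.comp z hsub
      have heq : (fun x : E n => ⟪x - z, pv⟫) = fun x : E n => (innerSL ℝ pv) (x - z) := by
        funext x; rw [innerSL_apply_apply]; exact real_inner_comm _ _
      rw [heq]
      simpa using h0
    have s4 : HasFDerivAt (fun x : E n => g ‖x - z‖) ((0 : E n →L[ℝ] ℝ)) z := by
      have h0 : HasFDerivAt (fun y : E n => g ‖y‖) (0 : E n →L[ℝ] ℝ) (z - z) := by
        rwa [sub_self]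
      have := HasFDerivAt.comp (g := fun y : E n => g ‖y‖) (f := fun x : E n => x - z) z h0 hsub
      simpa [Function.comp_def] using this
    have tot : HasFDerivAt (fun x : E n => (τ - τ) * p0 + ⟪x - z, pv⟫ - g (τ - τ) - g ‖x - z‖)
        (((0 : E n →L[ℝ] ℝ) + innerSL ℝ pv) - 0 - 0) z := by
      exact (((hasFDerivAt_const ((τ - τ) * p0) z).add s2).sub
        (hasFDerivAt_const (g (τ - τ)) z)).sub s4
    have tot' : HasFDerivAt (fun x : E n => (τ - τ) * p0 + ⟪x - z, pv⟫ - g (τ - τ) - g ‖x - z‖)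
        (innerSL ℝ pv) z := by
      simpa using tot
    have hgr : HasGradientAt (fun x : E n => (τ - τ) * p0 + ⟪x - z, pv⟫ - g (τ - τ) - g ‖x - z‖)
        pv z := by
      rw [hasGradientAt_iff_hasFDerivAt]
      have : (InnerProductSpace.toDual ℝ (E n)) pv = innerSL ℝ pv := by
        ext y; simp [InnerProductSpace.toDual_apply_apply]
      rw [this]
      exact tot'
    exact hgr.gradient


lemma Oplus_mono {n : ℕ} {τ : ℝ} {z : E n} {d d' : ℝ} (hdd : d ≤ d') :
    Oplus d τ z ⊆ Oplus d' τ z := by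
  intro q hq
  exact ⟨⟨hq.1.1, hq.1.2.trans (by linarith)⟩, hq.2.trans hdd⟩

lemma den_pos {n : ℕ} {τ : ℝ} {z : E n} {q : ℝ × E n} (hqne : q ≠ ((τ, z) : ℝ × E n)) :
    0 < |q.1 - τ| + ‖q.2 - z‖ := by
  rcases eq_or_ne q.1 τ with h1 | h1
  · have h2 : q.2 ≠ z := by
      intro h2; exact hqne (Prod.ext_iff.mpr ⟨h1, h2⟩)
    have h3 : 0 < ‖q.2 - z‖ := norm_pos_iff.mpr (sub_ne_zero.mpr h2)
    have := abs_nonneg (q.1 - τ); linarith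
  · have h3 : 0 < |q.1 - τ| := abs_pos.mpr (sub_ne_zero.mpr h1)
    have := norm_nonneg (q.2 - z); linarith

/-- From a vanishing modulus bound on `N` we produce a `C¹` penalty `g` dominating `N`
on a punctured right neighborhood. -/
lemma modulus_dominating {n : ℕ} (τ : ℝ) (z : E n) (N : ℝ × E n → ℝ)
    (hmod : ∀ ε > (0:ℝ), ∃ δ > (0:ℝ), ∀ q ∈ Oplus δ τ z, q ≠ ((τ, z) : ℝ × E n) →
      N q ≤ ε * ((q.1 - τ) + ‖q.2 - z‖)) :
    ∃ g : ℝ → ℝ, ContDiff ℝ 1 g ∧ g 0 = 0 ∧ deriv g 0 = 0 ∧ (∀ r, 0 ≤ g r) ∧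
      ∃ δ > (0:ℝ), ∀ q ∈ Oplus δ τ z, q ≠ ((τ, z) : ℝ × E n) →
        N q ≤ g (q.1 - τ) + g ‖q.2 - z‖ := by
  obtain ⟨r0, hr0, hr0P⟩ := hmod 1 one_pos
  set Mm : ℝ → ℝ :=
    fun r => sSup (insert 0 (N '' (Oplus (min r r0) τ z \ {((τ, z) : ℝ × E n)}))) with hMm
  have helt : ∀ r : ℝ, ∀ x ∈ insert (0:ℝ)
      (N '' (Oplus (min r r0) τ z \ {((τ, z) : ℝ × E n)})), x ≤ 2 * r0 := by
    intro r x hx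
    rcases Set.mem_insert_iff.mp hx with rfl | hx'
    · linarith
    · obtain ⟨q, hq', rfl⟩ := hx'
      have hqr0 : q ∈ Oplus r0 τ z := Oplus_mono (min_le_right r r0) hq'.1
      have hb := hr0P q hqr0 (by simpa using hq'.2)
      have h1 : q.1 - τ ≤ r0 := by have := hqr0.1.2; linarith
      have h2 : ‖q.2 - z‖ ≤ r0 := hqr0.2
      linarith
  have hbdd : ∀ r : ℝ, BddAbove (insert (0:ℝ)
      (N '' (Oplus (min r r0) τ z \ {((τ, z) : ℝ × E n)}))) :=
    fun r => ⟨2*r0, fun x hx => helt r x hx⟩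
  have hMnn : ∀ r, 0 ≤ Mm r := fun r => le_csSup (hbdd r) (Set.mem_insert _ _)
  have hMbd : ∀ r, Mm r ≤ 2*r0 := fun r => csSup_le (Set.insert_nonempty _ _) (helt r)
  have hMmono : Monotone Mm := by
    intro a b hab
    apply csSup_le_csSup (hbdd b) (Set.insert_nonempty _ _)
    apply Set.insert_subset_insert
    apply Set.image_mono
    exact Set.diff_subset_diff_left (Oplus_mono (min_le_min_right r0 hab))
  have hMsmall : ∀ ε > (0:ℝ), ∃ δ > (0:ℝ), ∀ r, 0 < r → r ≤ δ → Mm r ≤ ε * r := by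
    intro ε hε
    obtain ⟨δε, hδε, hδP⟩ := hmod (ε/2) (by positivity)
    refine ⟨min δε r0, lt_min hδε hr0, fun r hr hrle => ?_⟩
    apply csSup_le (Set.insert_nonempty _ _)
    intro x hx
    rcases Set.mem_insert_iff.mp hx with rfl | hx'
    · positivity
    · obtain ⟨q, hq', rfl⟩ := hx'
      have hrr0 : min r r0 = r := min_eq_left (le_trans hrle (min_le_right _ _))
      rw [hrr0] at hq'
      have hqδ : q ∈ Oplus δε τ z := Oplus_mono (le_trans hrle (min_le_left _ _)) hq'.1
      have hb := hδP q hqδ (by simpa using hq'.2)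
      have h1 : q.1 - τ ≤ r := by have := hq'.1.1.2; linarith
      have h2 : ‖q.2 - z‖ ≤ r := hq'.1.2
      nlinarith
  obtain ⟨g, hgC, hg0, _hgd, hgderiv0, hgnn, hgdom⟩ :=
    exists_C1_dominating Mm (2*r0) (by linarith) hMmono hMnn hMbd hMsmall
  refine ⟨g, hgC, hg0, hgderiv0, hgnn, r0, hr0, fun q hq hqne => ?_⟩
  set ρ := max (q.1 - τ) ‖q.2 - z‖ with hρ
  have hρpos : 0 < ρ := by
    rcases lt_or_ge 0 ρ with hgt | hle
    · exact hgt
    · exfalso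
      have h1 : q.1 - τ ≤ 0 := le_trans (le_max_left _ _) hle
      have h2 : ‖q.2 - z‖ ≤ 0 := le_trans (le_max_right _ _) hle
      have h1' : τ ≤ q.1 := hq.1.1
      have hz2 : q.2 = z := sub_eq_zero.mp (norm_le_zero_iff.mp h2)
      have ht : q.1 = τ := by linarith
      exact hqne (Prod.ext_iff.mpr ⟨ht, hz2⟩)
  have hρler0 : ρ ≤ r0 := max_le (by have := hq.1.2; linarith) hq.2
  have hqρ : q ∈ Oplus (min ρ r0) τ z := by
    rw [min_eq_left hρler0]
    exact ⟨⟨hq.1.1, by have := le_max_left (q.1 - τ) ‖q.2 - z‖; linarith⟩, le_max_right _ _⟩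
  have hNM : N q ≤ Mm ρ :=
    le_csSup (hbdd ρ) (Set.mem_insert_of_mem _ ⟨q, ⟨hqρ, by simpa using hqne⟩, rfl⟩)
  have hMg : Mm ρ ≤ g ρ := hgdom ρ hρpos
  have hfin : g ρ ≤ g (q.1 - τ) + g ‖q.2 - z‖ := by
    rcases max_choice (q.1 - τ) ‖q.2 - z‖ with hc | hc <;> rw [hρ, hc]
    · linarith [hgnn ‖q.2 - z‖]
    · linarith [hgnn (q.1 - τ)]
  linarith

/-- `φ ∈ Φ` takes the same value on `w` and on the time-`τ` segment of its constant
right extension. -/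
lemma phi_center {n : ℕ} (t0 ϑ h : ℝ) (hh : 0 < h) (φ : ℝ → E n → (ℝ → E n) → ℝ)
    (hφ : InPhi t0 ϑ h φ) (τ : ℝ) (hτ : τ ∈ Icc t0 ϑ) (z : E n) (w : ℝ → E n)
    (hw : PCh h w) : φ τ z w = φ τ z (seg (ext0 τ z w) τ) := by
  set w' : ℝ → E n := seg (ext0 τ z w) τ with hw'def
  have hagree : ∀ ξ ∈ Ico (-h) (0:ℝ), w' ξ = w ξ := by
    intro ξ hξ
    have hlt : τ + ξ < τ := by have := hξ.2; linarith
    simp only [hw'def, seg, ext0, if_pos hlt]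
    congr 1; ring
  have hPC' : PCh h w' := by
    obtain ⟨k, ξp, hsm, h0, hlast, hpieces⟩ := hw
    refine ⟨k, ξp, hsm, h0, hlast, fun i => ?_⟩
    have hsub : Ico (ξp i.castSucc) (ξp i.succ) ⊆ Ico (-h) (0:ℝ) := by
      intro x hx
      constructor
      · calc -h = ξp 0 := h0.symm
          _ ≤ ξp i.castSucc := hsm.monotone (Fin.zero_le _)
          _ ≤ x := hx.1
      · calc x < ξp i.succ := hx.2
          _ ≤ ξp (Fin.last (k+1)) := hsm.monotone (Fin.le_last _)
          _ = 0 := hlast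
    constructor
    · exact ((hpieces i).1).congr (fun x hx => hagree x (hsub hx))
    · obtain ⟨L, hL⟩ := (hpieces i).2
      refine ⟨L, hL.congr' ?_⟩
      have hmem : Ioo (ξp i.castSucc) (ξp i.succ) ∈ 𝓝[<] (ξp i.succ) :=
        Ioo_mem_nhdsLT_of_mem ⟨hsm (Fin.castSucc_lt_succ (i := i)), le_rfl⟩
      filter_upwards [hmem] with x hx
      exact (hagree x (hsub ⟨hx.1.le, hx.2⟩)).symm
  have hInfeq : normInf h w' = normInf h w := by
    unfold normInf
    congr 1
    exact image_congr (fun x hx => by rw [hagree x hx])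
  set α : ℝ := 1 + ‖z‖ + |normInf h w| with hα
  have hαpos : 0 < α := by positivity
  have hm1 : memP h α z w :=
    ⟨hw, by nlinarith [abs_nonneg (normInf h w), norm_nonneg z],
      by nlinarith [le_abs_self (normInf h w), norm_nonneg z]⟩
  have hm2 : memP h α z w' := ⟨hPC', hm1.2.1, by rw [hInfeq]; exact hm1.2.2⟩
  obtain ⟨lφ, hlφ, hlip⟩ := hφ.2 α hαpos
  have hkey := hlip τ hτ z z w w' hm1 hm2
  have hae : ∀ᵐ x : ℝ ∂(volume : Measure ℝ), x ≠ 0 := by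
    rw [MeasureTheory.ae_iff]
    have : {a : ℝ | ¬ a ≠ 0} = {(0:ℝ)} := by ext a; simp
    rw [this]
    exact measure_singleton 0
  have hnz : norm1 h (fun ξ => w ξ - w' ξ) = 0 := by
    unfold norm1
    have hcongr : ∀ᵐ x ∂(volume : Measure ℝ), x ∈ Set.uIoc (-h) (0:ℝ) →
        ‖w x - w' x‖ = (fun _ : ℝ => (0:ℝ)) x := by
      filter_upwards [hae] with x hx hxI
      have hI : x ∈ Ioc (-h) (0:ℝ) := by
        rwa [Set.uIoc_of_le (by linarith : -h ≤ 0)] at hxI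
      have hxmem : x ∈ Ico (-h) (0:ℝ) := ⟨hI.1.le, lt_of_le_of_ne hI.2 hx⟩
      rw [hagree x hxmem, sub_self, norm_zero]
    rw [intervalIntegral.integral_congr_ae hcongr]
    simp
  rw [sub_self, norm_zero, hnz, add_zero, mul_zero] at hkey
  have habs : |φ τ z w - φ τ z w'| = 0 := le_antisymm hkey (abs_nonneg _)
  exact sub_eq_zero.mp (abs_eq_zero.mp habs)

theorem viscosity_solution_iff_subsuperdifferential_inequalities
    (t0 ϑ h : ℝ) (hth : t0 < ϑ) (hh : 0 < h) (n : ℕ) (hn : 0 < n)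
    (l m : ℕ) (U : Set (E l)) (V : Set (E m))
    (hUc : IsCompact U) (hVc : IsCompact V) (hUne : U.Nonempty) (hVne : V.Nonempty)
    (f : ℝ → E n → (ℝ → E n) → E l → E m → E n)
    (f0 : ℝ → E n → (ℝ → E n) → E l → E m → ℝ) (σ : E n → (ℝ → E n) → ℝ)
    (hC1 : CondC1 t0 ϑ h f f0) (hC2 : CondC2 t0 ϑ h U V f f0)
    (hC3 : CondC3 t0 ϑ h U V f f0) (hC4 : CondC4 t0 ϑ h U V f f0) (hC5 : CondC5 h σ)
    (φ : ℝ → E n → (ℝ → E n) → ℝ) (hφ : InPhi t0 ϑ h φ) :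
    IsViscositySol t0 ϑ h U V f f0 σ φ ↔
      (TerminalCond ϑ h σ φ ∧
        ∀ τ ∈ Ico t0 ϑ, ∀ (z : E n) (w : ℝ → E n), PCh h w →
          (∀ p ∈ Dminus φ τ z w, p.1 + Ham U V f f0 τ z w p.2 ≤ 0) ∧
          (∀ q ∈ Dplus φ τ z w, 0 ≤ q.1 + Ham U V f f0 τ z w q.2)) := by
  constructor
  · rintro ⟨_hin, hterm, hvA, hvB⟩
    refine ⟨hterm, fun τ hτ z w hw => ⟨?_, ?_⟩⟩
    · -- subdifferential inequality
      rintro ⟨p0, pv⟩ hp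
      simp only [Dminus, Set.mem_setOf_eq] at hp
      set N : ℝ × E n → ℝ := fun q =>
        φ τ z w + (q.1 - τ) * p0 + ⟪q.2 - z, pv⟫ - φ q.1 q.2 (seg (ext0 τ z w) q.1) with hN
      have hmod : ∀ ε > (0:ℝ), ∃ δ > (0:ℝ), ∀ q ∈ Oplus δ τ z, q ≠ ((τ, z) : ℝ × E n) →
          N q ≤ ε * ((q.1 - τ) + ‖q.2 - z‖) := by
        intro ε hε
        obtain ⟨δ, hδ, hδP⟩ := hp ε hε
        refine ⟨δ, hδ, fun q hq hqne => ?_⟩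
        have hden := den_pos hqne
        have hineq := hδP q hq hqne
        rw [le_div_iff₀ hden] at hineq
        have habs : |q.1 - τ| = q.1 - τ := abs_of_nonneg (by have := hq.1.1; linarith)
        rw [habs] at hineq
        simp only [hN]
        nlinarith [hineq]
      obtain ⟨g, hgC, hg0, hgd0, hgnn, δ₁, hδ₁, hdom⟩ := modulus_dominating τ z N hmod
      obtain ⟨ψ, hψC, hψeq, hψd, hψg⟩ := test_function τ z p0 pv g hgC hg0 hgd0
      have hψτz : ψ ((τ, z) : ℝ × E n) = 0 := by
        rw [hψeq]; simp [hg0]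
      have hprem : ∀ q ∈ Oplus δ₁ τ z,
          φ τ z w - ψ (τ, z) ≤ φ q.1 q.2 (seg (ext0 τ z w) q.1) - ψ q := by
        intro q hq
        rcases eq_or_ne q ((τ, z) : ℝ × E n) with rfl | hqne
        · rw [phi_center t0 ϑ h hh φ hφ τ ⟨hτ.1, hτ.2.le⟩ z w hw]
        · have h1 := hdom q hq hqne
          rw [hψτz, hψeq q]
          simp only [hN] at h1
          linarith
      have hconc := hvA τ hτ z w hw ψ hψC δ₁ hδ₁ hprem
      rw [hψd, hψg] at hconc
      exact hconc
    · -- superdifferential inequality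
      rintro ⟨q0, qv⟩ hq
      simp only [Dplus, Set.mem_setOf_eq] at hq
      set N : ℝ × E n → ℝ := fun q =>
        φ q.1 q.2 (seg (ext0 τ z w) q.1) - φ τ z w - (q.1 - τ) * q0 - ⟪q.2 - z, qv⟫ with hN
      have hmod : ∀ ε > (0:ℝ), ∃ δ > (0:ℝ), ∀ q ∈ Oplus δ τ z, q ≠ ((τ, z) : ℝ × E n) →
          N q ≤ ε * ((q.1 - τ) + ‖q.2 - z‖) := by
        intro ε hε
        obtain ⟨δ, hδ, hδP⟩ := hq ε hε
        refine ⟨δ, hδ, fun q hqO hqne => ?_⟩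
        have hden := den_pos hqne
        have hineq := hδP q hqO hqne
        rw [div_le_iff₀ hden] at hineq
        have habs : |q.1 - τ| = q.1 - τ := abs_of_nonneg (by have := hqO.1.1; linarith)
        rw [habs] at hineq
        simp only [hN]
        nlinarith [hineq]
      obtain ⟨g, hgC, hg0, hgd0, hgnn, δ₁, hδ₁, hdom⟩ := modulus_dominating τ z N hmod
      have hnegC : ContDiff ℝ 1 (fun r => -(g r)) := hgC.neg
      have hneg0 : (fun r => -(g r)) 0 = 0 := by simp [hg0]
      have hnegd : deriv (fun r => -(g r)) 0 = 0 := by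
        rw [deriv.fun_neg, hgd0, neg_zero]
      obtain ⟨ψ, hψC, hψeq, hψd, hψg⟩ := test_function τ z q0 qv _ hnegC hneg0 hnegd
      have hψτz : ψ ((τ, z) : ℝ × E n) = 0 := by
        rw [hψeq]; simp [hg0]
      have hprem : ∀ q ∈ Oplus δ₁ τ z,
          φ q.1 q.2 (seg (ext0 τ z w) q.1) - ψ q ≤ φ τ z w - ψ (τ, z) := by
        intro q hqO
        rcases eq_or_ne q ((τ, z) : ℝ × E n) with rfl | hqne
        · rw [phi_center t0 ϑ h hh φ hφ τ ⟨hτ.1, hτ.2.le⟩ z w hw]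
        · have h1 := hdom q hqO hqne
          rw [hψτz, hψeq q]
          simp only [hN] at h1
          simp only [sub_neg_eq_add]
          linarith
      have hconc := hvB τ hτ z w hw ψ hψC δ₁ hδ₁ hprem
      rw [hψd, hψg] at hconc
      exact hconc
  · rintro ⟨hterm, hineq⟩
    refine ⟨hφ, hterm, ?_, ?_⟩
    · intro τ hτ z w hw ψ hψ δ hδ hprem
      have hdiff : HasFDerivAt ψ (fderiv ℝ ψ ((τ, z) : ℝ × E n)) ((τ, z) : ℝ × E n) :=
        (hψ.differentiable one_ne_zero _).hasFDerivAt
      set D := fderiv ℝ ψ ((τ, z) : ℝ × E n) with hD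
      have hcurve : HasDerivAt (fun t : ℝ => ((t, z) : ℝ × E n)) (((1:ℝ), (0:E n)) : ℝ × E n) τ :=
        HasDerivAt.prodMk (hasDerivAt_id τ) (hasDerivAt_const τ z)
      have hA1 : HasDerivAt (fun t => ψ (t, z)) (D ((1:ℝ), (0:E n))) τ :=
        hdiff.comp_hasDerivAt τ hcurve
      have hp0D : deriv (fun t => ψ (t, z)) τ = D ((1:ℝ), (0:E n)) := hA1.deriv
      have hcurve2 : HasFDerivAt (fun x : E n => ((τ, x) : ℝ × E n))
          (((0 : E n →L[ℝ] ℝ)).prod (ContinuousLinearMap.id ℝ (E n))) z :=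
        HasFDerivAt.prodMk (hasFDerivAt_const τ z) (hasFDerivAt_id z)
      have hA2 : HasFDerivAt (fun x : E n => ψ (τ, x))
          (D.comp (((0 : E n →L[ℝ] ℝ)).prod (ContinuousLinearMap.id ℝ (E n)))) z :=
        HasFDerivAt.comp (g := ψ) (f := fun x : E n => ((τ, x) : ℝ × E n)) z hdiff hcurve2
      have hgrad : HasGradientAt (fun x : E n => ψ (τ, x))
          (gradient (fun x : E n => ψ (τ, x)) z) z := hA2.differentiableAt.hasGradientAt
      have hpvD : ∀ y : E n, ⟪gradient (fun x : E n => ψ (τ, x)) z, y⟫ = D ((0:ℝ), y) := by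
        intro y
        have h1 := hgrad.hasFDerivAt.unique hA2
        have h2 := congrArg (fun (L : E n →L[ℝ] ℝ) => L y) h1
        simpa [InnerProductSpace.toDual_apply_apply, ContinuousLinearMap.comp_apply,
          ContinuousLinearMap.prod_apply] using h2
      have hmem : ((deriv (fun t => ψ (t, z)) τ, gradient (fun x : E n => ψ (τ, x)) z) :
          ℝ × E n) ∈ Dminus φ τ z w := by
        simp only [Dminus, Set.mem_setOf_eq]
        intro ε hε
        obtain ⟨δ₂, hδ₂, hδ₂P⟩ :=
          Metric.eventually_nhds_iff.mp (isLittleO_iff.mp hdiff.isLittleO hε)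
        refine ⟨min δ (δ₂/2), lt_min hδ (by positivity), fun q hq hqne => ?_⟩
        have hden := den_pos hqne
        have hq1 : τ ≤ q.1 := hq.1.1
        have hq2 : q.1 ≤ τ + min δ (δ₂/2) := hq.1.2
        have hq3 : ‖q.2 - z‖ ≤ min δ (δ₂/2) := hq.2
        have hqd : dist q ((τ, z) : ℝ × E n) < δ₂ := by
          rw [Prod.dist_eq]
          have h1 : dist q.1 τ ≤ min δ (δ₂/2) := by
            rw [Real.dist_eq, abs_of_nonneg (by linarith : (0:ℝ) ≤ q.1 - τ)]
            linarith
          have h2 : dist q.2 z ≤ min δ (δ₂/2) := by rw [dist_eq_norm]; exact hq3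
          have hmin : min δ (δ₂/2) < δ₂ := lt_of_le_of_lt (min_le_right _ _) (by linarith)
          exact lt_of_le_of_lt (max_le h1 h2) hmin
        have herr := hδ₂P hqd
        have hqsub : q - ((τ, z) : ℝ × E n) = ((q.1 - τ, q.2 - z) : ℝ × E n) := rfl
        have hDq : D ((q.1 - τ, q.2 - z) : ℝ × E n)
            = (q.1 - τ) * D ((1:ℝ), (0:E n)) + D ((0:ℝ), q.2 - z) := by
          have hsplit : (((q.1 - τ, q.2 - z)) : ℝ × E n)
              = (q.1 - τ) • (((1:ℝ), (0:E n)) : ℝ × E n) + (((0:ℝ), q.2 - z) : ℝ × E n) := by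
            simp [Prod.ext_iff]
          rw [hsplit, map_add, _root_.map_smul, smul_eq_mul]
        have hnorm_le : ‖q - ((τ, z) : ℝ × E n)‖ ≤ |q.1 - τ| + ‖q.2 - z‖ := by
          rw [hqsub, Prod.norm_def]
          refine max_le ?_ ?_
          · simp only [Real.norm_eq_abs]
            exact le_add_of_nonneg_right (norm_nonneg _)
          · exact le_add_of_nonneg_left (abs_nonneg _)
        have herr2 : ‖ψ q - ψ (τ, z) - D (q - ((τ, z) : ℝ × E n))‖
            ≤ ε * (|q.1 - τ| + ‖q.2 - z‖) := by
          refine le_trans herr ?_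
          exact mul_le_mul_of_nonneg_left hnorm_le hε.le
        have herr3 : -(ε * (|q.1 - τ| + ‖q.2 - z‖))
            ≤ ψ q - ψ (τ, z) - D (q - ((τ, z) : ℝ × E n)) := by
          have := neg_abs_le (ψ q - ψ (τ, z) - D (q - ((τ, z) : ℝ × E n)))
          rw [Real.norm_eq_abs] at herr2
          linarith
        rw [le_div_iff₀ hden]
        have hprem' := hprem q (Oplus_mono (min_le_left δ (δ₂/2)) hq)
        have hinner : ⟪q.2 - z, gradient (fun x : E n => ψ (τ, x)) z⟫ = D ((0:ℝ), q.2 - z) := by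
          rw [real_inner_comm]; exact hpvD (q.2 - z)
        rw [hqsub, hDq] at herr3
        rw [hinner, hp0D]
        linarith
      have := (hineq τ hτ z w hw).1 _ hmem
      simpa using this
    · intro τ hτ z w hw ψ hψ δ hδ hprem
      have hdiff : HasFDerivAt ψ (fderiv ℝ ψ ((τ, z) : ℝ × E n)) ((τ, z) : ℝ × E n) :=
        (hψ.differentiable one_ne_zero _).hasFDerivAt
      set D := fderiv ℝ ψ ((τ, z) : ℝ × E n) with hD
      have hcurve : HasDerivAt (fun t : ℝ => ((t, z) : ℝ × E n)) (((1:ℝ), (0:E n)) : ℝ × E n) τ :=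
        HasDerivAt.prodMk (hasDerivAt_id τ) (hasDerivAt_const τ z)
      have hA1 : HasDerivAt (fun t => ψ (t, z)) (D ((1:ℝ), (0:E n))) τ :=
        hdiff.comp_hasDerivAt τ hcurve
      have hp0D : deriv (fun t => ψ (t, z)) τ = D ((1:ℝ), (0:E n)) := hA1.deriv
      have hcurve2 : HasFDerivAt (fun x : E n => ((τ, x) : ℝ × E n))
          (((0 : E n →L[ℝ] ℝ)).prod (ContinuousLinearMap.id ℝ (E n))) z :=
        HasFDerivAt.prodMk (hasFDerivAt_const τ z) (hasFDerivAt_id z)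
      have hA2 : HasFDerivAt (fun x : E n => ψ (τ, x))
          (D.comp (((0 : E n →L[ℝ] ℝ)).prod (ContinuousLinearMap.id ℝ (E n)))) z :=
        HasFDerivAt.comp (g := ψ) (f := fun x : E n => ((τ, x) : ℝ × E n)) z hdiff hcurve2
      have hgrad : HasGradientAt (fun x : E n => ψ (τ, x))
          (gradient (fun x : E n => ψ (τ, x)) z) z := hA2.differentiableAt.hasGradientAt
      have hpvD : ∀ y : E n, ⟪gradient (fun x : E n => ψ (τ, x)) z, y⟫ = D ((0:ℝ), y) := by
        intro y
        have h1 := hgrad.hasFDerivAt.unique hA2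
        have h2 := congrArg (fun (L : E n →L[ℝ] ℝ) => L y) h1
        simpa [InnerProductSpace.toDual_apply_apply, ContinuousLinearMap.comp_apply,
          ContinuousLinearMap.prod_apply] using h2
      have hmem : ((deriv (fun t => ψ (t, z)) τ, gradient (fun x : E n => ψ (τ, x)) z) :
          ℝ × E n) ∈ Dplus φ τ z w := by
        simp only [Dplus, Set.mem_setOf_eq]
        intro ε hε
        obtain ⟨δ₂, hδ₂, hδ₂P⟩ :=
          Metric.eventually_nhds_iff.mp (isLittleO_iff.mp hdiff.isLittleO hε)
        refine ⟨min δ (δ₂/2), lt_min hδ (by positivity), fun q hq hqne => ?_⟩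
        have hden := den_pos hqne
        have hq1 : τ ≤ q.1 := hq.1.1
        have hq2 : q.1 ≤ τ + min δ (δ₂/2) := hq.1.2
        have hq3 : ‖q.2 - z‖ ≤ min δ (δ₂/2) := hq.2
        have hqd : dist q ((τ, z) : ℝ × E n) < δ₂ := by
          rw [Prod.dist_eq]
          have h1 : dist q.1 τ ≤ min δ (δ₂/2) := by
            rw [Real.dist_eq, abs_of_nonneg (by linarith : (0:ℝ) ≤ q.1 - τ)]
            linarith
          have h2 : dist q.2 z ≤ min δ (δ₂/2) := by rw [dist_eq_norm]; exact hq3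
          have hmin : min δ (δ₂/2) < δ₂ := lt_of_le_of_lt (min_le_right _ _) (by linarith)
          exact lt_of_le_of_lt (max_le h1 h2) hmin
        have herr := hδ₂P hqd
        have hqsub : q - ((τ, z) : ℝ × E n) = ((q.1 - τ, q.2 - z) : ℝ × E n) := rfl
        have hDq : D ((q.1 - τ, q.2 - z) : ℝ × E n)
            = (q.1 - τ) * D ((1:ℝ), (0:E n)) + D ((0:ℝ), q.2 - z) := by
          have hsplit : (((q.1 - τ, q.2 - z)) : ℝ × E n)
              = (q.1 - τ) • (((1:ℝ), (0:E n)) : ℝ × E n) + (((0:ℝ), q.2 - z) : ℝ × E n) := by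
            simp [Prod.ext_iff]
          rw [hsplit, map_add, _root_.map_smul, smul_eq_mul]
        have hnorm_le : ‖q - ((τ, z) : ℝ × E n)‖ ≤ |q.1 - τ| + ‖q.2 - z‖ := by
          rw [hqsub, Prod.norm_def]
          refine max_le ?_ ?_
          · simp only [Real.norm_eq_abs]
            exact le_add_of_nonneg_right (norm_nonneg _)
          · exact le_add_of_nonneg_left (abs_nonneg _)
        have herr2 : ‖ψ q - ψ (τ, z) - D (q - ((τ, z) : ℝ × E n))‖
            ≤ ε * (|q.1 - τ| + ‖q.2 - z‖) := by
          refine le_trans herr ?_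
          exact mul_le_mul_of_nonneg_left hnorm_le hε.le
        have herr3 : ψ q - ψ (τ, z) - D (q - ((τ, z) : ℝ × E n))
            ≤ ε * (|q.1 - τ| + ‖q.2 - z‖) := by
          have := le_abs_self (ψ q - ψ (τ, z) - D (q - ((τ, z) : ℝ × E n)))
          rw [Real.norm_eq_abs] at herr2
          linarith
        rw [div_le_iff₀ hden]
        have hprem' := hprem q (Oplus_mono (min_le_left δ (δ₂/2)) hq)
        have hinner : ⟪q.2 - z, gradient (fun x : E n => ψ (τ, x)) z⟫ = D ((0:ℝ), q.2 - z) := by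
          rw [real_inner_comm]; exact hpvD (q.2 - z)
        rw [hqsub, hDq] at herr3
        rw [hinner, hp0D]
        linarith
      have := (hineq τ hτ z w hw).2 _ hmem
      simpa using this

end DGPaper
end
end

section
/- Let a functional φ ∈ Φ be a viscosity solution of the Cauchy problem. If φ is ci-differentiable at a point (τ,z,w(·)) ∈ G with τ < ϑ, then φ satisfies the Hamilton–Jacobi equation at this point: ∂^{ci}_{τ,w} φ(τ,z,w(·)) + H(τ,z,w(·), ∇_z φ(τ,z,w(·))) = 0. -/
noncomputable section

open MeasureTheory Set Filter Topology Asymptotics RealInnerProductSpace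
open scoped NNReal

namespace DGPaper

variable {n l m : ℕ}

lemma exists_modulus {P : Type*} [PseudoMetricSpace P] (p₀ : P) (S : Set P)
    (Fn d : P → ℝ) (hdnn : ∀ p, 0 ≤ d p) (hdist : ∀ p, dist p p₀ ≤ d p)
    (hF : ∀ ε > (0:ℝ), ∃ δ > (0:ℝ), ∀ p : P, dist p p₀ < δ → p ∈ S → |Fn p| ≤ ε * d p) :
    ∃ ω : ℝ → ℝ, Monotone ω ∧ (∀ r, 0 ≤ ω r) ∧ (∀ r, ω r ≤ 1) ∧
      (∀ ε > (0:ℝ), ∃ δ > (0:ℝ), ω δ ≤ ε) ∧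
      ∃ δ₀ > (0:ℝ), ∀ p ∈ S, d p ≤ δ₀ → |Fn p| ≤ ω (d p) * d p := by
  obtain ⟨δ₁, hδ₁pos, hδ₁⟩ := hF 1 one_pos
  set T : ℝ → Set ℝ := fun r =>
    insert 0 ((fun p => |Fn p| / d p) '' {p | p ∈ S ∧ 0 < d p ∧ d p ≤ min r (δ₁/2)}) with hT
  have hne : ∀ r, (T r).Nonempty := fun r => ⟨0, mem_insert _ _⟩
  have hbdd : ∀ r, ∀ x ∈ T r, x ≤ 1 := by
    intro r x hx
    rcases hx with rfl | ⟨p, ⟨hpS, hpd, hpr⟩, rfl⟩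
    · norm_num
    · have hlt : dist p p₀ < δ₁ := by
        have h1 := hdist p
        have h2 := min_le_right r (δ₁/2)
        linarith
      have := hδ₁ p hlt hpS
      rw [div_le_one hpd]
      linarith
  have hBdd : ∀ r, BddAbove (T r) := fun r => ⟨1, fun x hx => hbdd r x hx⟩
  refine ⟨fun r => sSup (T r), ?_, ?_, ?_, ?_, ?_⟩
  · intro r r' hrr'
    apply csSup_le_csSup (hBdd r') (hne r)
    intro x hx
    rcases hx with rfl | ⟨p, ⟨hpS, hpd, hpr⟩, rfl⟩
    · exact mem_insert _ _
    · exact mem_insert_of_mem _ ⟨p, ⟨hpS, hpd, le_trans hpr (by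
        exact min_le_min_right _ hrr')⟩, rfl⟩
  · intro r
    exact le_csSup (hBdd r) (mem_insert _ _)
  · intro r
    exact csSup_le (hne r) (hbdd r)
  · intro ε hε
    obtain ⟨δ₂, hδ₂pos, hδ₂⟩ := hF ε hε
    refine ⟨δ₂/2, by linarith, ?_⟩
    apply csSup_le (hne _)
    intro x hx
    rcases hx with rfl | ⟨p, ⟨hpS, hpd, hpr⟩, rfl⟩
    · exact hε.le
    · have hlt : dist p p₀ < δ₂ := by
        have h1 := hdist p
        have h2 := min_le_left (δ₂/2) (δ₁/2)
        linarith
      have := hδ₂ p hlt hpS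
      rw [div_le_iff₀ hpd]
      calc |Fn p| ≤ ε * d p := this
        _ = ε * d p := rfl
  · refine ⟨δ₁/2, by linarith, fun p hpS hpd => ?_⟩
    rcases eq_or_lt_of_le (hdnn p) with h0 | h0
    · have hlt : dist p p₀ < δ₁ := by
        have h1 := hdist p
        rw [← h0] at h1
        linarith
      have h2 := hδ₁ p hlt hpS
      rw [← h0] at h2 ⊢
      rw [mul_zero] at h2 ⊢
      exact h2
    · have hmem : |Fn p| / d p ∈ T (d p) :=
        mem_insert_of_mem _ ⟨p, ⟨hpS, h0, le_min le_rfl hpd⟩, rfl⟩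
      have := le_csSup (hBdd (d p)) hmem
      rw [div_le_iff₀ h0] at this
      linarith

lemma exists_phi_of_modulus (ω : ℝ → ℝ) (hmono : Monotone ω)
    (h0 : ∀ r, 0 ≤ ω r) (h1 : ∀ r, ω r ≤ 1)
    (htend : ∀ ε > (0:ℝ), ∃ δ > (0:ℝ), ω δ ≤ ε) :
    ∃ Φ Φd : ℝ → ℝ,
      (∀ r, HasDerivAt Φ (Φd r) r) ∧ Continuous Φd ∧ Φ 0 = 0 ∧ Φd 0 = 0 ∧
      (∀ r, 0 ≤ r → 3 * r * ω (2 * r) ≤ Φ r) ∧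
      (∀ r, 0 ≤ r → Φ r ≤ 6 * r * ω (8 * r)) ∧
      (∀ r, 0 ≤ Φd r) ∧ (∀ r, 0 ≤ r → Φd r ≤ 6 * ω (8 * r)) := by
  have hInt : ∀ a b : ℝ, IntervalIntegrable ω volume a b := fun a b =>
    hmono.intervalIntegrable
  set ω₂ : ℝ → ℝ := fun r => ∫ s in r..(2*r), ω s with hω₂def
  have hω₂low : ∀ r : ℝ, 0 ≤ r → r * ω r ≤ ω₂ r := by
    intro r hr
    have h := intervalIntegral.integral_mono_on (by linarith : r ≤ 2*r)
      (intervalIntegrable_const) (hInt r (2*r))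
      (fun x hx => hmono hx.1)
    rw [intervalIntegral.integral_const, smul_eq_mul] at h
    calc r * ω r = (2*r - r) * ω r := by ring
      _ ≤ ω₂ r := h
  have hω₂up : ∀ r : ℝ, 0 ≤ r → ω₂ r ≤ r * ω (2*r) := by
    intro r hr
    have h := intervalIntegral.integral_mono_on (by linarith : r ≤ 2*r)
      (hInt r (2*r)) (intervalIntegrable_const)
      (fun x hx => hmono hx.2)
    rw [intervalIntegral.integral_const, smul_eq_mul] at h
    calc ω₂ r ≤ (2*r - r) * ω (2*r) := h
      _ = r * ω (2*r) := by ring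
  have habs : ∀ a b : ℝ, |∫ s in a..b, ω s| ≤ |b - a| := by
    intro a b
    have := intervalIntegral.norm_integral_le_of_norm_le_const
      (C := 1) (f := ω) (a := a) (b := b) (fun x _ => by
        rw [Real.norm_eq_abs, abs_of_nonneg (h0 x)]; exact h1 x)
    simpa using this
  have hω₂lip : ∀ a b : ℝ, |ω₂ a - ω₂ b| ≤ 3 * |a - b| := by
    have key : ∀ a b : ℝ, b ≤ a → |ω₂ a - ω₂ b| ≤ 3 * |a - b| := by
      intro a b hba
      have e1 := intervalIntegral.integral_add_adjacent_intervals
        (hInt b a) (hInt a (2*a))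
      have e2 := intervalIntegral.integral_add_adjacent_intervals
        (hInt b (2*b)) (hInt (2*b) (2*a))
      have hid : ω₂ a - ω₂ b = (∫ s in (2*b)..(2*a), ω s) - ∫ s in b..a, ω s := by
        simp only [hω₂def]; linarith [e1, e2]
      rw [hid]
      calc |(∫ s in (2*b)..(2*a), ω s) - ∫ s in b..a, ω s|
          ≤ |∫ s in (2*b)..(2*a), ω s| + |∫ s in b..a, ω s| := abs_sub _ _
        _ ≤ |2*a - 2*b| + |a - b| := add_le_add (habs _ _) (habs _ _)
        _ ≤ 3 * |a - b| := by
            rw [abs_of_nonneg (by linarith : (0:ℝ) ≤ a - b),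
              abs_of_nonneg (by linarith : (0:ℝ) ≤ 2*a - 2*b)]
            linarith
    intro a b
    rcases le_total b a with hle | hle
    · exact key a b hle
    · have := key b a hle
      rwa [abs_sub_comm (ω₂ b), abs_sub_comm b a] at this
  have hω₂cont : Continuous ω₂ := by
    apply Metric.continuous_iff.2
    intro a ε hε
    refine ⟨ε/3, by linarith, fun b hb => ?_⟩
    rw [Real.dist_eq] at hb ⊢
    calc |ω₂ b - ω₂ a| ≤ 3 * |b - a| := hω₂lip b a
      _ < ε := by linarith
  set ρ : ℝ → ℝ := fun s => if s ≤ 0 then 0 else ω₂ s / s with hρdef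
  have hρ0 : ∀ s : ℝ, s ≤ 0 → ρ s = 0 := fun s hs => by simp [hρdef, hs]
  have hρpos : ∀ s : ℝ, 0 < s → ρ s = ω₂ s / s := fun s hs => by
    simp [hρdef, not_le.2 hs]
  have hρnn : ∀ s, 0 ≤ ρ s := by
    intro s
    rcases le_or_gt s 0 with hs | hs
    · rw [hρ0 s hs]
    · rw [hρpos s hs]
      have h2 : (0:ℝ) ≤ ω₂ s := le_trans (mul_nonneg hs.le (h0 s)) (hω₂low s hs.le)
      exact div_nonneg h2 hs.le
  have hρup : ∀ s : ℝ, 0 < s → ρ s ≤ ω (2*s) := by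
    intro s hs
    rw [hρpos s hs, div_le_iff₀ hs]
    calc ω₂ s ≤ s * ω (2*s) := hω₂up s hs.le
      _ = ω (2*s) * s := mul_comm _ _
  have hρlow : ∀ s : ℝ, 0 < s → ω s ≤ ρ s := by
    intro s hs
    rw [hρpos s hs, le_div_iff₀ hs]
    calc ω s * s = s * ω s := mul_comm _ _
      _ ≤ ω₂ s := hω₂low s hs.le
  have hρcont : Continuous ρ := by
    apply continuous_iff_continuousAt.2
    intro s
    rcases lt_trichotomy s 0 with hs | hs | hs
    · have hev : ∀ᶠ t in 𝓝 s, ρ t = 0 := by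
        filter_upwards [Iio_mem_nhds hs] with t ht
        exact hρ0 t (le_of_lt ht)
      exact ContinuousAt.congr continuousAt_const (by filter_upwards [hev] with t ht using ht.symm)
    · subst hs
      rw [Metric.continuousAt_iff]
      intro ε hε
      obtain ⟨δ', hδ'pos, hδ'⟩ := htend (ε/2) (by linarith)
      refine ⟨δ'/2, by linarith, fun t ht => ?_⟩
      rw [Real.dist_eq, sub_zero] at ht
      rw [Real.dist_eq, hρ0 0 le_rfl, sub_zero]
      rcases le_or_gt t 0 with h | h
      · rw [hρ0 t h]; simpa using hε
      · rw [abs_of_nonneg (hρnn t)]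
        have : ρ t ≤ ω (2*t) := hρup t h
        have h2 : ω (2*t) ≤ ω δ' := hmono (by
          rw [abs_of_pos h] at ht; linarith)
        linarith
    · have hev : ∀ᶠ t in 𝓝 s, ρ t = ω₂ t / t := by
        filter_upwards [Ioi_mem_nhds hs] with t ht
        exact hρpos t ht
      have hc : ContinuousAt (fun t => ω₂ t / t) s :=
        (hω₂cont.continuousAt).div continuousAt_id (ne_of_gt hs)
      exact hc.congr (by filter_upwards [hev] with t ht using ht.symm)
  have hgcont : Continuous (fun s : ℝ => ρ (4*s)) :=
    hρcont.comp (continuous_const.mul continuous_id)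
  refine ⟨fun r => 6 * ∫ s in (0:ℝ)..r, ρ (4*s), fun r => 6 * ρ (4*r),
    ?_, ?_, ?_, ?_, ?_, ?_, ?_, ?_⟩
  · intro r
    exact ((hgcont.integral_hasStrictDerivAt 0 r).hasDerivAt).const_mul 6
  · exact continuous_const.mul (hρcont.comp (continuous_const.mul continuous_id))
  · simp
  · simp [hρ0 0 le_rfl]
  · intro r hr
    rcases eq_or_lt_of_le hr with h | hr
    · simp [← h]
    have hint : ∀ a b : ℝ, IntervalIntegrable (fun s => ρ (4*s)) volume a b :=
      fun a b => (hgcont.intervalIntegrable a b)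
    have hsplit := intervalIntegral.integral_add_adjacent_intervals
      (hint 0 (r/2)) (hint (r/2) r)
    have h1 : (0:ℝ) ≤ ∫ s in (0:ℝ)..(r/2), ρ (4*s) :=
      intervalIntegral.integral_nonneg (by linarith) (fun x _ => hρnn _)
    have h2 : (r/2) * ω (2*r) ≤ ∫ s in (r/2)..r, ρ (4*s) := by
      have := intervalIntegral.integral_mono_on (by linarith : r/2 ≤ r)
        (intervalIntegrable_const) (hint (r/2) r)
        (fun x hx => by
          have hx1 : 0 < 4*x := by nlinarith [hx.1]
          calc ω (2*r) ≤ ω (4*x) := hmono (by nlinarith [hx.1])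
            _ ≤ ρ (4*x) := hρlow _ hx1)
      rw [intervalIntegral.integral_const, smul_eq_mul] at this
      calc r/2 * ω (2*r) = (r - r/2) * ω (2*r) := by ring
        _ ≤ ∫ s in (r/2)..r, ρ (4*s) := this
    have hle : r/2 * ω (2*r) ≤ ∫ s in (0:ℝ)..r, ρ (4*s) := by
      rw [← hsplit]; linarith
    have hring : 6 * (r/2 * ω (2*r)) = 3*r*ω (2*r) := by ring
    show 3 * r * ω (2*r) ≤ 6 * ∫ s in (0:ℝ)..r, ρ (4*s)
    linarith
  · intro r hr
    have hint : ∀ a b : ℝ, IntervalIntegrable (fun s => ρ (4*s)) volume a b :=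
      fun a b => (hgcont.intervalIntegrable a b)
    have h2 : (∫ s in (0:ℝ)..r, ρ (4*s)) ≤ r * ω (8*r) := by
      have := intervalIntegral.integral_mono_on (f := fun s => ρ (4*s))
        (g := fun _ => ω (8*r)) (μ := volume) hr
        (hint 0 r) (intervalIntegrable_const)
        (fun x hx => by
          show ρ (4*x) ≤ ω (8*r)
          rcases eq_or_lt_of_le hx.1 with h | h
          · rw [← h, mul_zero, hρ0 0 le_rfl]
            exact h0 _
          · calc ρ (4*x) ≤ ω (2*(4*x)) := hρup _ (by linarith)
              _ ≤ ω (8*r) := hmono (by nlinarith [hx.2]))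
      rw [intervalIntegral.integral_const, smul_eq_mul] at this
      calc (∫ s in (0:ℝ)..r, ρ (4*s)) ≤ (r - 0) * ω (8*r) := this
        _ = r * ω (8*r) := by ring
    show 6 * (∫ s in (0:ℝ)..r, ρ (4*s)) ≤ 6 * r * ω (8*r)
    nlinarith [h2]
  · intro r
    have := hρnn (4*r)
    show 0 ≤ 6 * ρ (4*r)
    linarith
  · intro r hr
    rcases eq_or_lt_of_le hr with h | hr
    · rw [← h]
      have hz : ρ (4*(0:ℝ)) = 0 := by rw [mul_zero]; exact hρ0 0 le_rfl
      show 6 * ρ (4*(0:ℝ)) ≤ 6 * ω (8*0)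
      rw [hz]
      have := h0 (8*(0:ℝ)); linarith
    · have hb := hρup (4*r) (by linarith)
      have h2 : ω (2*(4*r)) ≤ ω (8*r) := hmono (by linarith)
      show 6 * ρ (4*r) ≤ 6 * ω (8*r)
      linarith

lemma chi_aux {F : Type*} [NormedAddCommGroup F] [InnerProductSpace ℝ F] (z : F)
    (ω Φ Φd : ℝ → ℝ) (hmono : Monotone ω)
    (hd : ∀ r, HasDerivAt Φ (Φd r) r) (hΦdcont : Continuous Φd)
    (hΦ0 : Φ 0 = 0)
    (hup : ∀ r, 0 ≤ r → Φ r ≤ 6 * r * ω (8 * r))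
    (hΦnn : ∀ r, 0 ≤ r → 0 ≤ Φ r)
    (hΦdnn : ∀ r, 0 ≤ Φd r) (hΦdup : ∀ r, 0 ≤ r → Φd r ≤ 6 * ω (8 * r))
    (htend : ∀ ε > (0:ℝ), ∃ δ > (0:ℝ), ω δ ≤ ε) :
    ContDiff ℝ 1 (fun x => Φ ‖x - z‖) ∧ HasFDerivAt (fun x => Φ ‖x - z‖) (0 : F →L[ℝ] ℝ) z := by
  have hΦcd : ContDiff ℝ 1 Φ := by
    rw [contDiff_one_iff_deriv]
    refine ⟨fun r => (hd r).differentiableAt, ?_⟩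
    have : deriv Φ = Φd := funext fun r => (hd r).deriv
    rw [this]; exact hΦdcont
  have hN : ∀ y : F, y ≠ z → ContDiffAt ℝ 1 (fun y => ‖y - z‖) y := fun y hy =>
    ContDiffAt.norm ℝ (contDiffAt_id.sub contDiffAt_const) (sub_ne_zero.2 hy)
  have hχz : HasFDerivAt (fun x => Φ ‖x - z‖) (0 : F →L[ℝ] ℝ) z := by
    rw [hasFDerivAt_iff_isLittleO_nhds_zero]
    rw [Asymptotics.isLittleO_iff]
    intro ε hε
    obtain ⟨δ, hδpos, hδ⟩ := htend (ε/6) (by linarith)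
    rw [Metric.eventually_nhds_iff]
    refine ⟨δ/8, by linarith, fun v hv => ?_⟩
    rw [dist_zero_right] at hv
    have hsz : z + v - z = v := by abel
    simp only [hsz, sub_self, norm_zero, hΦ0, ContinuousLinearMap.zero_apply, sub_zero]
    have h1 : Φ ‖v‖ ≤ 6 * ‖v‖ * ω (8 * ‖v‖) := hup _ (norm_nonneg v)
    have h2 : ω (8 * ‖v‖) ≤ ω δ := hmono (by linarith)
    have h3 : 0 ≤ Φ ‖v‖ := hΦnn _ (norm_nonneg v)
    rw [Real.norm_eq_abs, abs_of_nonneg h3]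
    calc Φ ‖v‖ ≤ 6 * ‖v‖ * ω (8 * ‖v‖) := h1
      _ ≤ 6 * ‖v‖ * ω δ := by nlinarith [norm_nonneg v, h2]
      _ ≤ ε * ‖v‖ := by nlinarith [norm_nonneg v]
  have hlipN : LipschitzWith 1 (fun y : F => ‖y - z‖) := by
    apply LipschitzWith.of_dist_le_mul
    intro a b
    rw [Real.dist_eq, dist_eq_norm, NNReal.coe_one, one_mul]
    have := abs_norm_sub_norm_le (a - z) (b - z)
    rwa [sub_sub_sub_cancel_right] at this
  have hdiff : Differentiable ℝ (fun x => Φ ‖x - z‖) := by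
    intro y
    rcases eq_or_ne y z with rfl | hy
    · exact hχz.differentiableAt
    · exact ((hd _).differentiableAt).comp y ((hN y hy).differentiableAt one_ne_zero)
  have hbound : ∀ y : F, y ≠ z → ‖fderiv ℝ (fun x => Φ ‖x - z‖) y‖ ≤ 6 * ω (8 * ‖y - z‖) := by
    intro y hy
    have hNy : HasFDerivAt (fun x : F => ‖x - z‖)
        (fderiv ℝ (fun x : F => ‖x - z‖) y) y :=
      ((hN y hy).differentiableAt one_ne_zero).hasFDerivAt
    have hcomp : HasFDerivAt (fun x => Φ ‖x - z‖)
        (Φd ‖y - z‖ • fderiv ℝ (fun x : F => ‖x - z‖) y) y :=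
      HasDerivAt.comp_hasFDerivAt y (hd _) hNy
    rw [hcomp.fderiv]
    have hDn : ‖fderiv ℝ (fun x : F => ‖x - z‖) y‖ ≤ 1 := by
      have := norm_fderiv_le_of_lipschitz ℝ hlipN (x₀ := y)
      simpa using this
    calc ‖Φd ‖y - z‖ • fderiv ℝ (fun x : F => ‖x - z‖) y‖
        = |Φd ‖y - z‖| * ‖fderiv ℝ (fun x : F => ‖x - z‖) y‖ := by
          rw [norm_smul, Real.norm_eq_abs]
      _ ≤ Φd ‖y - z‖ * 1 := by
          rw [abs_of_nonneg (hΦdnn _)]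
          exact mul_le_mul_of_nonneg_left hDn (hΦdnn _)
      _ ≤ 6 * ω (8 * ‖y - z‖) := by
          rw [mul_one]; exact hΦdup _ (norm_nonneg _)
  have hcont : Continuous (fderiv ℝ (fun x => Φ ‖x - z‖)) := by
    rw [continuous_iff_continuousAt]
    intro y
    rcases eq_or_ne y z with rfl | hy
    · rw [Metric.continuousAt_iff]
      intro ε hε
      obtain ⟨δ, hδpos, hδ⟩ := htend (ε/13) (by linarith)
      refine ⟨δ/8, by linarith, fun x hx => ?_⟩
      rw [dist_eq_norm, hχz.fderiv, sub_zero]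
      rcases eq_or_ne x y with rfl | hxy
      · simpa [hχz.fderiv] using hε
      · have h1 := hbound x hxy
        have h2 : ω (8 * ‖x - y‖) ≤ ω δ := hmono (by
          rw [dist_eq_norm] at hx; linarith)
        calc ‖fderiv ℝ (fun x => Φ ‖x - y‖) x‖ ≤ 6 * ω (8 * ‖x - y‖) := h1
          _ ≤ 6 * (ε/13) := by linarith
          _ < ε := by linarith
    · have hop : IsOpen {y : F | y ≠ z} := isOpen_compl_singleton
      have hcd : ContDiffOn ℝ 1 (fun x => Φ ‖x - z‖) {y : F | y ≠ z} := by
        intro y' hy'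
        exact ((hΦcd.contDiffAt).comp y' (hN y' hy')).contDiffWithinAt
      exact (hcd.continuousOn_fderiv_of_isOpen hop le_rfl).continuousAt (hop.mem_nhds hy)
  exact ⟨contDiff_one_iff_fderiv.2 ⟨hdiff, hcont⟩, hχz⟩

lemma ext0_mem_Lam (ϑ h τ : ℝ) (hτϑ : τ < ϑ) {n : ℕ}
    (z : E n) (w : ℝ → E n) (hw : PCh h w) : ext0 τ z w ∈ Lam ϑ h τ z w := by
  obtain ⟨k, ξ, hsm, hξ0, hξlast, hseg⟩ := hw
  refine ⟨?_, ?_, ?_, ?_⟩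
  · refine ⟨k + 1, Fin.snoc (fun i : Fin (k+2) => ξ i + τ) ϑ, ?_, ?_, ?_, ?_⟩
    · rw [Fin.strictMono_iff_lt_succ]
      intro i
      induction i using Fin.lastCases with
      | last =>
        rw [Fin.succ_last, Fin.snoc_castSucc, Fin.snoc_last, hξlast]
        linarith
      | cast j =>
        rw [Fin.succ_castSucc, Fin.snoc_castSucc, Fin.snoc_castSucc]
        have := hsm (Fin.castSucc_lt_succ : j.castSucc < j.succ)
        linarith
    · have : (0 : Fin (k + 1 + 2)) = Fin.castSucc 0 := by simp
      rw [this, Fin.snoc_castSucc, hξ0]; ring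
    · rw [← Fin.succ_last, Fin.succ_last, Fin.snoc_last]
    · intro i
      induction i using Fin.lastCases with
      | last =>
        constructor
        · rw [Fin.succ_last, Fin.snoc_last]
          have hcs : (Fin.last (k+1)).castSucc = Fin.castSucc (Fin.last (k+1)) := rfl
          rw [hcs, Fin.snoc_castSucc, hξlast, zero_add]
          refine (continuousOn_const (c := z)).congr fun t ht => ?_
          simp [ext0, not_lt.2 ht.1]
        · refine ⟨z, ?_⟩
          rw [Fin.succ_last, Fin.snoc_last]
          have hev : ∀ᶠ t in 𝓝[<] ϑ, t ∈ Ioo τ ϑ := by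
            apply Ioo_mem_nhdsLT_of_mem
            exact ⟨hτϑ, le_refl ϑ⟩
          apply Tendsto.congr' _ tendsto_const_nhds
          filter_upwards [hev] with t ht
          simp [ext0, not_lt.2 ht.1.le]
      | cast j =>
        have hsucc_le : ξ j.succ ≤ 0 := by
          rw [← hξlast]; exact hsm.monotone (Fin.le_last _)
        constructor
        · rw [Fin.succ_castSucc, Fin.snoc_castSucc, Fin.snoc_castSucc]
          have heq : ∀ t ∈ Ico (ξ j.castSucc + τ) (ξ j.succ + τ),
              ext0 τ z w t = w (t - τ) := by
            intro t ht
            have : t < τ := by have := ht.2; linarith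
            simp [ext0, this]
          apply ContinuousOn.congr _ heq
          have hmaps : MapsTo (fun t : ℝ => t - τ) (Ico (ξ j.castSucc + τ) (ξ j.succ + τ))
              (Ico (ξ j.castSucc) (ξ j.succ)) := by
            intro t ht
            rw [mem_Ico] at ht
            exact ⟨by show ξ j.castSucc ≤ t - τ; linarith [ht.1],
                   by show t - τ < ξ j.succ; linarith [ht.2]⟩
          exact (hseg j).1.comp ((continuous_sub_right τ).continuousOn) hmaps
        · obtain ⟨L, hL⟩ := (hseg j).2
          refine ⟨L, ?_⟩
          rw [Fin.succ_castSucc, Fin.snoc_castSucc]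
          have hsub : Tendsto (fun t : ℝ => t - τ) (𝓝[<] (ξ j.succ + τ)) (𝓝[<] (ξ j.succ)) := by
            apply tendsto_nhdsWithin_of_tendsto_nhds_of_eventually_within
            · have h1 : Tendsto (fun t : ℝ => t - τ) (𝓝 (ξ j.succ + τ)) (𝓝 (ξ j.succ)) := by
                have := (continuous_sub_right τ).tendsto (ξ j.succ + τ)
                simpa using this
              exact h1.mono_left nhdsWithin_le_nhds
            · filter_upwards [eventually_mem_nhdsWithin] with t ht
              have h2 : t < ξ j.succ + τ := ht
              show t - τ ∈ Iio (ξ j.succ)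
              exact mem_Iio.2 (by linarith)
          have hcomp : Tendsto (fun t : ℝ => w (t - τ)) (𝓝[<] (ξ j.succ + τ)) (𝓝 L) :=
            hL.comp hsub
          apply Tendsto.congr' _ hcomp
          filter_upwards [eventually_mem_nhdsWithin] with t ht
          have : t < τ := by
            have : t < ξ j.succ + τ := ht
            linarith
          simp [ext0, this]
  · simp [ext0]
  · intro t ht
    simp [ext0, ht.2]
  · refine ⟨0, fun x hx y hy => ?_⟩
    simp [ext0, not_lt.2 hx.1, not_lt.2 hy.1]


theorem viscosity_solution_satisfies_HJ_at_ci_differentiability_points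
    (t0 ϑ h : ℝ) (hth : t0 < ϑ) (hh : 0 < h) (n : ℕ) (hn : 0 < n)
    (l m : ℕ) (U : Set (E l)) (V : Set (E m))
    (hUc : IsCompact U) (hVc : IsCompact V) (hUne : U.Nonempty) (hVne : V.Nonempty)
    (f : ℝ → E n → (ℝ → E n) → E l → E m → E n)
    (f0 : ℝ → E n → (ℝ → E n) → E l → E m → ℝ) (σ : E n → (ℝ → E n) → ℝ)
    (hC1 : CondC1 t0 ϑ h f f0) (hC2 : CondC2 t0 ϑ h U V f f0)
    (hC3 : CondC3 t0 ϑ h U V f f0) (hC4 : CondC4 t0 ϑ h U V f f0) (hC5 : CondC5 h σ)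
    (φ : ℝ → E n → (ℝ → E n) → ℝ) (hvis : IsViscositySol t0 ϑ h U V f f0 σ φ)
    (τ : ℝ) (hτ : τ ∈ Ico t0 ϑ) (z : E n) (w : ℝ → E n) (hw : PCh h w)
    (c : ℝ) (g : E n) (hci : HasCiDerivAt ϑ h φ c g τ z w) :
    c + Ham U V f f0 τ z w g = 0 := by
  obtain ⟨hInPhi, hTerm, hsub, hsup⟩ := hvis
  have hτϑ : τ < ϑ := hτ.2
  have hκ : ext0 τ z w ∈ Lam ϑ h τ z w := ext0_mem_Lam ϑ h τ hτϑ z w hw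
  have hlo := hci (ext0 τ z w) hκ
  -- ε–δ form of the little-o estimate
  have hFed : ∀ ε > (0:ℝ), ∃ δ > (0:ℝ), ∀ p : ℝ × E n,
      dist p ((τ, z) : ℝ × E n) < δ → p ∈ Icc τ ϑ ×ˢ (univ : Set (E n)) →
      |φ p.1 p.2 (seg (ext0 τ z w) p.1) - φ τ z w - (p.1 - τ) * c - ⟪p.2 - z, g⟫| ≤
        ε * (|p.1 - τ| + ‖p.2 - z‖) := by
    intro ε hε
    have hev := hlo.def hε
    rw [eventually_nhdsWithin_iff, Metric.eventually_nhds_iff] at hev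
    obtain ⟨δ, hδpos, hδ⟩ := hev
    refine ⟨δ, hδpos, fun p hp hpS => ?_⟩
    have h2 := hδ hp hpS
    rwa [Real.norm_eq_abs, Real.norm_eq_abs,
      abs_of_nonneg (add_nonneg (abs_nonneg _) (norm_nonneg _))] at h2
  obtain ⟨ω, hmono, hωnn, hω1, hωtend, δ₀, hδ₀pos, hdom⟩ :=
    exists_modulus ((τ, z) : ℝ × E n) (Icc τ ϑ ×ˢ (univ : Set (E n)))
      (fun p => φ p.1 p.2 (seg (ext0 τ z w) p.1) - φ τ z w - (p.1 - τ) * c - ⟪p.2 - z, g⟫)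
      (fun p => |p.1 - τ| + ‖p.2 - z‖)
      (fun p => add_nonneg (abs_nonneg _) (norm_nonneg _))
      (fun p => by
        rw [Prod.dist_eq, Real.dist_eq, dist_eq_norm]
        exact max_le (le_add_of_nonneg_right (norm_nonneg _))
          (le_add_of_nonneg_left (abs_nonneg _)))
      hFed
  obtain ⟨Φ, Φd, hd, hΦdcont, hΦ0, hΦd0, hlow, hup, hΦdnn, hΦdup⟩ :=
    exists_phi_of_modulus ω hmono hωnn hω1 hωtend
  have hΦnn : ∀ r, 0 ≤ r → 0 ≤ Φ r := fun r hr =>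
    le_trans (mul_nonneg (mul_nonneg (by norm_num) hr) (hωnn _)) (hlow r hr)
  obtain ⟨hχcd, hχz⟩ := chi_aux z ω Φ Φd hmono hd hΦdcont hΦ0 hup hΦnn hΦdnn hΦdup hωtend
  have hΦcd : ContDiff ℝ 1 Φ := by
    rw [contDiff_one_iff_deriv]
    refine ⟨fun r => (hd r).differentiableAt, ?_⟩
    rw [funext fun r => (hd r).deriv]
    exact hΦdcont
  set ψa : ℝ × E n → ℝ := fun p => c * p.1 + ⟪p.2, g⟫ + Φ (p.1 - τ) + Φ ‖p.2 - z‖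
    with hψadef
  set ψb : ℝ × E n → ℝ := fun p => c * p.1 + ⟪p.2, g⟫ - Φ (p.1 - τ) - Φ ‖p.2 - z‖
    with hψbdef
  have hinncd : ContDiff ℝ 1 (fun p : ℝ × E n => ⟪p.2, g⟫) := by
    have heq : (fun p : ℝ × E n => ⟪p.2, g⟫)
        = fun p : ℝ × E n => (innerSL ℝ g : E n →L[ℝ] ℝ) p.2 := by
      funext p
      simp [real_inner_comm, mul_comm]
    rw [heq]
    exact (innerSL ℝ g).contDiff.comp contDiff_snd
  have hc1 : ContDiff ℝ 1 (fun p : ℝ × E n => c * p.1) :=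
    contDiff_const.mul contDiff_fst
  have hc3 : ContDiff ℝ 1 (fun p : ℝ × E n => Φ (p.1 - τ)) :=
    hΦcd.comp (contDiff_fst.sub contDiff_const)
  have hc4 : ContDiff ℝ 1 (fun p : ℝ × E n => Φ ‖p.2 - z‖) :=
    hχcd.comp contDiff_snd
  have hψacd : ContDiff ℝ 1 ψa := by
    rw [hψadef]; exact ((hc1.add hinncd).add hc3).add hc4
  have hψbcd : ContDiff ℝ 1 ψb := by
    rw [hψbdef]; exact ((hc1.add hinncd).sub hc3).sub hc4
  -- derivative in t
  have hd1 : HasDerivAt (fun t : ℝ => c * t) c τ := by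
    simpa using (hasDerivAt_id τ).const_mul c
  have hsubder : HasDerivAt (fun t : ℝ => t - τ) 1 τ := by
    simpa using (hasDerivAt_id τ).sub_const τ
  have hd2 : HasDerivAt (fun t : ℝ => Φ (t - τ)) 0 τ := by
    have h3 := HasDerivAt.comp (x := τ) (h := fun t : ℝ => t - τ) (hd (τ - τ)) hsubder
    simpa [Function.comp_def, sub_self, hΦd0] using h3
  have hda : HasDerivAt (fun t => ψa (t, z)) c τ := by
    simp only [hψadef]
    have := ((hd1.add_const (⟪z, g⟫ : ℝ)).add hd2).add_const (Φ ‖z - z‖)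
    simpa using this
  have hdb : HasDerivAt (fun t => ψb (t, z)) c τ := by
    simp only [hψbdef]
    have := ((hd1.add_const (⟪z, g⟫ : ℝ)).sub hd2).sub_const (Φ ‖z - z‖)
    simpa using this
  -- gradient in x
  have hinner : HasFDerivAt (fun x : E n => ⟪x, g⟫)
      ((InnerProductSpace.toDual ℝ (E n)) g : E n →L[ℝ] ℝ) z := by
    have heq : (fun x : E n => ⟪x, g⟫)
        = fun x : E n => ((InnerProductSpace.toDual ℝ (E n)) g) x := by
      funext x
      simp [InnerProductSpace.toDual_apply_apply, real_inner_comm, mul_comm]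
    rw [heq]
    exact ((InnerProductSpace.toDual ℝ (E n)) g).hasFDerivAt
  have hga : HasGradientAt (fun x => ψa (τ, x)) g z := by
    rw [hasGradientAt_iff_hasFDerivAt]
    simp only [hψadef]
    have := ((hinner.const_add (c * τ)).add_const (Φ (τ - τ))).add hχz
    simpa [Pi.add_def] using this
  have hgb : HasGradientAt (fun x => ψb (τ, x)) g z := by
    rw [hasGradientAt_iff_hasFDerivAt]
    simp only [hψbdef]
    have := ((hinner.const_add (c * τ)).sub_const (Φ (τ - τ))).sub hχz
    simpa [Pi.sub_def] using this
  -- choice of δ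
  set δ : ℝ := min (δ₀/2) (ϑ - τ) with hδdef
  have hδpos : 0 < δ := lt_min (by linarith) (by linarith)
  -- common estimates on Oplus δ τ z
  have hest : ∀ p ∈ Oplus δ τ z,
      |φ p.1 p.2 (seg (ext0 τ z w) p.1) - φ τ z w - (p.1 - τ) * c - ⟪p.2 - z, g⟫| ≤
        Φ (p.1 - τ) + Φ ‖p.2 - z‖ := by
    intro p hp
    obtain ⟨hp1, hp2⟩ := hp
    have ha : 0 ≤ p.1 - τ := by linarith [hp1.1]
    have hb : 0 ≤ ‖p.2 - z‖ := norm_nonneg _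
    have hS : p ∈ Icc τ ϑ ×ˢ (univ : Set (E n)) := by
      refine ⟨⟨hp1.1, ?_⟩, mem_univ _⟩
      have h1 := hp1.2
      have h2 := min_le_right (δ₀/2) (ϑ - τ)
      rw [hδdef] at h1
      linarith
    have hdint : |p.1 - τ| + ‖p.2 - z‖ ≤ δ₀ := by
      rw [abs_of_nonneg ha]
      have h1 := hp1.2
      have h2 := hp2
      have h3 := min_le_left (δ₀/2) (ϑ - τ)
      rw [hδdef] at h1 h2
      linarith
    have hFb : |φ p.1 p.2 (seg (ext0 τ z w) p.1) - φ τ z w - (p.1 - τ) * c - ⟪p.2 - z, g⟫| ≤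
        ω (|p.1 - τ| + ‖p.2 - z‖) * (|p.1 - τ| + ‖p.2 - z‖) := hdom p hS hdint
    have hsplit : ω (|p.1 - τ| + ‖p.2 - z‖) * (|p.1 - τ| + ‖p.2 - z‖) ≤
        Φ (p.1 - τ) + Φ ‖p.2 - z‖ := by
      rw [abs_of_nonneg ha]
      have key : ω ((p.1 - τ) + ‖p.2 - z‖) * ((p.1 - τ) + ‖p.2 - z‖) ≤
          3*(p.1 - τ)*ω (2*(p.1 - τ)) + 3*‖p.2 - z‖*ω (2*‖p.2 - z‖) := by
        rcases le_total (p.1 - τ) ‖p.2 - z‖ with hab | hab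
        · have m1 : ω ((p.1 - τ) + ‖p.2 - z‖) ≤ ω (2*‖p.2 - z‖) := hmono (by linarith)
          nlinarith [hωnn ((p.1 - τ) + ‖p.2 - z‖), hωnn (2*(p.1 - τ)), hωnn (2*‖p.2 - z‖),
            mul_nonneg (mul_nonneg (by norm_num : (0:ℝ) ≤ 3) ha) (hωnn (2*(p.1 - τ)))]
        · have m1 : ω ((p.1 - τ) + ‖p.2 - z‖) ≤ ω (2*(p.1 - τ)) := hmono (by linarith)
          nlinarith [hωnn ((p.1 - τ) + ‖p.2 - z‖), hωnn (2*(p.1 - τ)), hωnn (2*‖p.2 - z‖),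
            mul_nonneg (mul_nonneg (by norm_num : (0:ℝ) ≤ 3) hb) (hωnn (2*‖p.2 - z‖))]
      calc ω ((p.1 - τ) + ‖p.2 - z‖) * ((p.1 - τ) + ‖p.2 - z‖)
          ≤ 3*(p.1 - τ)*ω (2*(p.1 - τ)) + 3*‖p.2 - z‖*ω (2*‖p.2 - z‖) := key
        _ ≤ Φ (p.1 - τ) + Φ ‖p.2 - z‖ := add_le_add (hlow _ ha) (hlow _ hb)
    linarith
  -- the hypotheses of the viscosity conditions
  have hψaval : ∀ p : ℝ × E n, ψa p = c * p.1 + ⟪p.2, g⟫ + Φ (p.1 - τ) + Φ ‖p.2 - z‖ :=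
    fun p => rfl
  have hψbval : ∀ p : ℝ × E n, ψb p = c * p.1 + ⟪p.2, g⟫ - Φ (p.1 - τ) - Φ ‖p.2 - z‖ :=
    fun p => rfl
  have hψaτz : ψa (τ, z) = c * τ + ⟪z, g⟫ := by
    rw [hψaval]; simp [hΦ0]
  have hψbτz : ψb (τ, z) = c * τ + ⟪z, g⟫ := by
    rw [hψbval]; simp [hΦ0]
  have hhyp_a : ∀ p ∈ Oplus δ τ z,
      φ τ z w - ψb (τ, z) ≤ φ p.1 p.2 (seg (ext0 τ z w) p.1) - ψb p := by
    intro p hp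
    have hest' := (abs_le.1 (hest p hp)).1
    have hsubin : ⟪p.2 - z, g⟫ = ⟪p.2, g⟫ - ⟪z, g⟫ := inner_sub_left _ _ _
    rw [hψbτz, hψbval p]
    rw [hsubin] at hest'
    linarith
  have hhyp_b : ∀ p ∈ Oplus δ τ z,
      φ p.1 p.2 (seg (ext0 τ z w) p.1) - ψa p ≤ φ τ z w - ψa (τ, z) := by
    intro p hp
    have hest' := (abs_le.1 (hest p hp)).2
    have hsubin : ⟪p.2 - z, g⟫ = ⟪p.2, g⟫ - ⟪z, g⟫ := inner_sub_left _ _ _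
    rw [hψaτz, hψaval p]
    rw [hsubin] at hest'
    linarith
  have Ha := hsub τ hτ z w hw ψb hψbcd δ hδpos hhyp_a
  have Hb := hsup τ hτ z w hw ψa hψacd δ hδpos hhyp_b
  rw [hdb.deriv, hgb.gradient] at Ha
  rw [hda.deriv, hga.gradient] at Hb
  linarith

end DGPaper
end
end

section
/- There exists ζ_* ∈ (0,h) such that the following holds: for every (τ_*,z_*,w_*(·)) ∈ G with τ_* < ϑ and every ν_* ∈ (τ_*, min{τ_* + ζ_*, ϑ}], there exists c_* > 0 such that, setting α_* = (ν_* − τ_*) c_* + 1 + max{‖z_*‖, ‖w_*(·)‖_∞}, one has |H(t,x,r(·),s) − H(t,x,r(·),s′)| ≤ c_* ‖s − s′‖ for all t ∈ [τ_*,ν_*], (x,r(·)) ∈ P(α_*), and s, s′ ∈ ℝ^n. -/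
noncomputable section

open MeasureTheory Set Filter Topology Asymptotics RealInnerProductSpace
open scoped NNReal

namespace DGPaper

variable {n l m : ℕ}

/-- A piecewise continuous function has bounded norm on `[a,b)`. -/
lemma bddAbove_norm_image_of_PCOn {x : ℝ → E n} {a b : ℝ} (hx : PCOn x a b) :
    BddAbove ((fun ξ => ‖x ξ‖) '' Ico a b) := by
  obtain ⟨k, ξ, hmono, h0, hlast, hpc⟩ := hx
  have piece : ∀ i : Fin (k + 1), ∃ C, ∀ t ∈ Ico (ξ i.castSucc) (ξ i.succ), ‖x t‖ ≤ C := by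
    intro i
    obtain ⟨hcont, L, hL⟩ := hpc i
    have hlt : ξ i.castSucc < ξ i.succ := hmono (Fin.castSucc_lt_succ (i := i))
    have hev : {t : ℝ | ‖x t‖ < ‖L‖ + 1} ∈ 𝓝[<] (ξ i.succ) :=
      (hL.norm.eventually_lt_const (by linarith [norm_nonneg L]))
    obtain ⟨b', hb', hsub⟩ := mem_nhdsLT_iff_exists_Ioo_subset.1 hev
    have hsubset : Icc (ξ i.castSucc) (max (ξ i.castSucc) b') ⊆ Ico (ξ i.castSucc) (ξ i.succ) :=
      fun t ht => ⟨ht.1, lt_of_le_of_lt ht.2 (max_lt hlt hb')⟩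
    obtain ⟨C, hC⟩ := isCompact_Icc.exists_bound_of_continuousOn (hcont.mono hsubset)
    refine ⟨max C (‖L‖ + 1), fun t ht => ?_⟩
    by_cases htb : b' < t
    · exact le_max_of_le_right (le_of_lt (hsub ⟨htb, ht.2⟩))
    · exact le_max_of_le_left (hC t ⟨ht.1, le_trans (not_lt.1 htb) (le_max_right _ _)⟩)
  choose C hC using piece
  refine ⟨Finset.univ.sup' Finset.univ_nonempty C, ?_⟩
  rintro _ ⟨t, ht, rfl⟩
  -- locate the piece containing `t`
  have hta : ξ 0 ≤ t := by rw [h0]; exact ht.1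
  have htb : t < ξ (Fin.last (k + 1)) := by rw [hlast]; exact ht.2
  set S : Finset (Fin (k + 2)) := Finset.univ.filter (fun i => ξ i ≤ t) with hS
  have hS0 : (0 : Fin (k + 2)) ∈ S := by simp [hS, hta]
  have hSne : S.Nonempty := ⟨0, hS0⟩
  set j : Fin (k + 2) := S.max' hSne with hj
  have hjS : j ∈ S := S.max'_mem hSne
  have hjle : ξ j ≤ t := by simpa [hS] using hjS
  have hjlt : (j : ℕ) < k + 1 := by
    rcases lt_or_eq_of_le (Nat.lt_succ_iff.1 j.isLt) with hlt | heq
    · exact hlt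
    · exfalso
      have : j = Fin.last (k + 1) := Fin.ext heq
      rw [this] at hjle; exact absurd hjle (not_le.2 htb)
  set i : Fin (k + 1) := ⟨(j : ℕ), hjlt⟩ with hi
  have hics : i.castSucc = j := Fin.ext rfl
  have hsucc : t < ξ i.succ := by
    by_contra hcon
    have hmem : i.succ ∈ S := by simp [hS, not_lt.1 hcon]
    have := S.le_max' _ hmem
    rw [← hj] at this
    have : i.succ ≤ i.castSucc := hics ▸ this
    exact absurd (Fin.castSucc_lt_succ (i := i)) (not_lt.2 this)
  have htmem : t ∈ Ico (ξ i.castSucc) (ξ i.succ) := ⟨hics ▸ hjle, hsucc⟩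
  exact le_trans (hC i t htmem) (Finset.le_sup' C (Finset.mem_univ i))

/-- Bound on the `L¹` norm from a pointwise bound. -/
lemma norm1_le_of_bound {h α : ℝ} (hh : 0 < h) (hα : 0 ≤ α) {r : ℝ → E n}
    (hb : ∀ ξ ∈ Ico (-h) (0 : ℝ), ‖r ξ‖ ≤ α) : norm1 h r ≤ h * α := by
  by_cases hi : IntervalIntegrable (fun ξ => ‖r ξ‖) volume (-h) 0
  · unfold norm1
    rw [intervalIntegral.integral_of_le (by linarith)]
    have h0 : ∀ᵐ ξ ∂(volume.restrict (Ioc (-h) (0 : ℝ))), ξ ≠ (0 : ℝ) := by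
      refine ae_restrict_of_ae ?_
      rw [ae_iff]
      have : {ξ : ℝ | ¬ ξ ≠ 0} = {0} := by ext ξ; simp
      rw [this]; exact measure_singleton 0
    have hmem : ∀ᵐ ξ ∂(volume.restrict (Ioc (-h) (0 : ℝ))), ξ ∈ Ioc (-h) (0 : ℝ) :=
      ae_restrict_mem measurableSet_Ioc
    have hae : (fun ξ => ‖r ξ‖) ≤ᶠ[ae (volume.restrict (Ioc (-h) (0 : ℝ)))] fun _ => α := by
      filter_upwards [h0, hmem] with ξ hξ0 hξm
      exact hb ξ ⟨le_of_lt hξm.1, lt_of_le_of_ne hξm.2 hξ0⟩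
    calc ∫ ξ in Ioc (-h) (0 : ℝ), ‖r ξ‖ ≤ ∫ _ in Ioc (-h) (0 : ℝ), α :=
          setIntegral_mono_ae_restrict hi.1 (integrableOn_const (by
            rw [Real.volume_Ioc]; exact ENNReal.ofReal_ne_top)) hae
      _ = h * α := by
          rw [setIntegral_const, Real.volume_real_Ioc_of_le (by linarith), smul_eq_mul]
          ring
  · unfold norm1
    rw [intervalIntegral.integral_undef hi]
    positivity

/-- `inf-sup` of uniformly bounded families is Lipschitz-stable. -/
lemma ciInf_ciSup_le_add {ι κ : Type*} [Nonempty ι] [Nonempty κ] (F G : ι → κ → ℝ) (D c : ℝ)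
    (hF : ∀ i j, |F i j| ≤ D) (hG : ∀ i j, |G i j| ≤ D)
    (hle : ∀ i j, F i j ≤ G i j + c) :
    (⨅ i, ⨆ j, F i j) ≤ (⨅ i, ⨆ j, G i j) + c := by
  have hFb : ∀ i, BddAbove (Set.range (F i)) := fun i =>
    ⟨D, by rintro _ ⟨j, rfl⟩; exact (abs_le.1 (hF i j)).2⟩
  have hGb : ∀ i, BddAbove (Set.range (G i)) := fun i =>
    ⟨D, by rintro _ ⟨j, rfl⟩; exact (abs_le.1 (hG i j)).2⟩
  have hSF_low : ∀ i, -D ≤ ⨆ j, F i j := fun i =>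
    le_trans (abs_le.1 (hF i (Classical.arbitrary κ))).1 (le_ciSup (hFb i) _)
  have key : ∀ i, (⨆ j, F i j) ≤ (⨆ j, G i j) + c := fun i =>
    ciSup_le fun j => le_trans (hle i j) (add_le_add_left (le_ciSup (hGb i) j) c)
  have hbdd : BddBelow (Set.range fun i => ⨆ j, F i j) :=
    ⟨-D, by rintro _ ⟨i, rfl⟩; exact hSF_low i⟩
  have h1 : ∀ i, (⨅ i', ⨆ j, F i' j) ≤ (⨆ j, G i j) + c := fun i =>
    le_trans (ciInf_le hbdd i) (key i)
  have h2 : (⨅ i', ⨆ j, F i' j) - c ≤ ⨅ i, ⨆ j, G i j :=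
    le_ciInf fun i => by linarith [h1 i]
  linarith

theorem hamiltonian_locally_lipschitz_in_direction
    (t0 ϑ h : ℝ) (hth : t0 < ϑ) (hh : 0 < h) (n : ℕ) (hn : 0 < n)
    (l m : ℕ) (U : Set (E l)) (V : Set (E m))
    (hUc : IsCompact U) (hVc : IsCompact V) (hUne : U.Nonempty) (hVne : V.Nonempty)
    (f : ℝ → E n → (ℝ → E n) → E l → E m → E n)
    (f0 : ℝ → E n → (ℝ → E n) → E l → E m → ℝ)
    (hC1 : CondC1 t0 ϑ h f f0) (hC2 : CondC2 t0 ϑ h U V f f0) :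
    ∃ ζ ∈ Ioo (0 : ℝ) h,
      ∀ τs ∈ Ico t0 ϑ, ∀ (zs : E n) (ws : ℝ → E n), PCh h ws →
        ∀ νs ∈ Ioc τs (min (τs + ζ) ϑ),
          ∃ cs > (0 : ℝ),
            ∀ t ∈ Icc τs νs, ∀ (x : E n) (r : ℝ → E n),
              memP h ((νs - τs) * cs + 1 + max ‖zs‖ (normInf h ws)) x r →
              ∀ s s' : E n,
                |Ham U V f f0 t x r s - Ham U V f f0 t x r s'| ≤ cs * ‖s - s'‖ := by
  obtain ⟨cf, hcf, hC2'⟩ := hC2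
  have hζpos : (0 : ℝ) < min (h / 2) (1 / (2 * cf * (2 + h))) :=
    lt_min (by linarith) (by positivity)
  refine ⟨min (h / 2) (1 / (2 * cf * (2 + h))), ⟨hζpos, lt_of_le_of_lt (min_le_left _ _)
    (by linarith)⟩, ?_⟩
  intro τs hτ zs ws hws νs hν
  set M := max ‖zs‖ (normInf h ws) with hMdef
  have hM0 : 0 ≤ M := le_max_of_le_left (norm_nonneg _)
  have hfac : (0 : ℝ) < 1 + (2 + h) * (1 + M) := by nlinarith
  set cs := 2 * cf * (1 + (2 + h) * (1 + M)) with hcsdef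
  have hcs : 0 < cs := by positivity
  refine ⟨cs, hcs, ?_⟩
  intro t ht x r hxr s s'
  set Δ := νs - τs with hΔdef
  have hΔ0 : 0 < Δ := by simp only [hΔdef]; linarith [hν.1]
  have hΔζ : Δ ≤ 1 / (2 * cf * (2 + h)) := by
    have h1 : νs ≤ τs + min (h / 2) (1 / (2 * cf * (2 + h))) :=
      le_trans hν.2 (min_le_left _ _)
    have := min_le_right (h / 2) (1 / (2 * cf * (2 + h)))
    simp only [hΔdef]; linarith
  set α := Δ * cs + 1 + M with hαdef
  have hα1 : 1 ≤ α := by nlinarith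
  have hα0 : 0 < α := by linarith
  -- t is in [t0, ϑ]
  have htI : t ∈ Icc t0 ϑ :=
    ⟨le_trans hτ.1 ht.1, le_trans ht.2 (le_trans hν.2 (min_le_right _ _))⟩
  obtain ⟨hrPC, hxα, hrα⟩ := hxr
  -- pointwise bounds on r
  have hbdd : BddAbove ((fun ξ => ‖r ξ‖) '' Ico (-h) (0 : ℝ)) :=
    bddAbove_norm_image_of_PCOn hrPC
  have hpt : ∀ ξ ∈ Ico (-h) (0 : ℝ), ‖r ξ‖ ≤ α := fun ξ hξ =>
    le_trans (le_csSup hbdd (Set.mem_image_of_mem _ hξ)) hrα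
  have hrh : ‖r (-h)‖ ≤ α := hpt (-h) ⟨le_refl _, by linarith⟩
  have hn1 : norm1 h r ≤ h * α := norm1_le_of_bound hh (le_of_lt hα0) hpt
  -- the uniform bound on the dynamics
  have hBle : cf * (1 + ‖x‖ + norm1 h r + ‖r (-h)‖) ≤ cs := by
    have hstep : cf * (1 + ‖x‖ + norm1 h r + ‖r (-h)‖) ≤ cf * (1 + (2 + h) * α) := by
      have : 1 + ‖x‖ + norm1 h r + ‖r (-h)‖ ≤ 1 + (2 + h) * α := by nlinarith
      nlinarith
    have hΔc : Δ * (2 * cf * (2 + h)) ≤ 1 := by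
      rw [le_div_iff₀ (by positivity)] at hΔζ; exact hΔζ
    have hmul : Δ * (2 * cf * (2 + h)) * cs ≤ 1 * cs :=
      mul_le_mul_of_nonneg_right hΔc (le_of_lt hcs)
    refine le_trans hstep ?_
    simp only [hcsdef, hαdef] at *
    nlinarith [hmul]
  have hfb : ∀ u ∈ U, ∀ v ∈ V, ‖f t x r u v‖ + |f0 t x r u v| ≤ cs := fun u hu v hv =>
    le_trans (hC2' t htI x r hrPC u hu v hv) hBle
  -- now the Lipschitz estimate on the Hamiltonian
  haveI : Nonempty U := hUne.to_subtype
  haveI : Nonempty V := hVne.to_subtype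
  set F : U → V → ℝ := fun u v => ⟪f t x r u v, s⟫ + f0 t x r u v with hFdef
  set G : U → V → ℝ := fun u v => ⟪f t x r u v, s'⟫ + f0 t x r u v with hGdef
  set D := cs * (1 + ‖s‖ + ‖s'‖) with hDdef
  have habs : ∀ (u : U) (v : V) (σ : E n), ‖σ‖ ≤ ‖s‖ + ‖s'‖ →
      |⟪f t x r u v, σ⟫ + f0 t x r u v| ≤ D := by
    intro u v σ hσ
    have h1 := hfb u u.2 v v.2
    have h2 : |⟪f t x r u v, σ⟫| ≤ ‖f t x r u v‖ * ‖σ‖ := abs_real_inner_le_norm _ _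
    have h3 : |⟪f t x r u v, σ⟫ + f0 t x r u v| ≤ |⟪f t x r u v, σ⟫| + |f0 t x r u v| :=
      abs_add_le _ _
    have h4 : ‖f t x r u v‖ ≤ cs := le_trans (le_add_of_nonneg_right (abs_nonneg _)) h1
    have h5 : |f0 t x r u v| ≤ cs := le_trans (le_add_of_nonneg_left (norm_nonneg _)) h1
    have h6 : ‖f t x r u v‖ * ‖σ‖ ≤ cs * (‖s‖ + ‖s'‖) :=
      mul_le_mul h4 hσ (norm_nonneg _) (le_of_lt hcs)
    simp only [hDdef]
    nlinarith
  have hFD : ∀ u v, |F u v| ≤ D := fun u v =>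
    habs u v s (by linarith [norm_nonneg s'])
  have hGD : ∀ u v, |G u v| ≤ D := fun u v =>
    habs u v s' (by linarith [norm_nonneg s])
  have hdiff : ∀ (u : U) (v : V), |F u v - G u v| ≤ cs * ‖s - s'‖ := by
    intro u v
    have : F u v - G u v = ⟪f t x r u v, s - s'⟫ := by
      simp only [hFdef, hGdef, inner_sub_right]; ring
    rw [this]
    refine le_trans (abs_real_inner_le_norm _ _) ?_
    have h4 : ‖f t x r u v‖ ≤ cs :=
      le_trans (le_add_of_nonneg_right (abs_nonneg _)) (hfb u u.2 v v.2)
    exact mul_le_mul_of_nonneg_right h4 (norm_nonneg _)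
  have hFG : ∀ u v, F u v ≤ G u v + cs * ‖s - s'‖ := fun u v => by
    linarith [(abs_le.1 (hdiff u v)).2]
  have hGF : ∀ u v, G u v ≤ F u v + cs * ‖s - s'‖ := fun u v => by
    linarith [(abs_le.1 (hdiff u v)).1]
  have e1 : Ham U V f f0 t x r s = ⨅ u : U, ⨆ v : V, F u v := rfl
  have e2 : Ham U V f f0 t x r s' = ⨅ u : U, ⨆ v : V, G u v := rfl
  rw [e1, e2, abs_sub_le_iff]
  constructor
  · linarith [ciInf_ciSup_le_add F G D (cs * ‖s - s'‖) hFD hGD hFG]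
  · linarith [ciInf_ciSup_le_add G F D (cs * ‖s - s'‖) hGD hFD hGF]

end DGPaper
end
end
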